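/- arXiv:1205.7036 — 5 statements merged into one kernel-verified Lean document; each statement's English description precedes it below -/
import Mathlib

section
/- Let H be a stabilizer matrix on n qubits with r rows, let S be its row space, and let E ⊆ Fin n. Then rank(H) + rank(H_E) ≤ 2·|E| + rank(H_Ē), and the cardinality of N(S)_E = {w : σ(w) = 0 and supp(w) ⊆ E} equals 2^(2|E| − rank(H) + rank(H_Ē) − rank(H_E)) times the cardinality of S_E = {s ∈ S : supp(s) ⊆ E}. (Consequently, each coset of S consisting of zero-syndrome errors covered by the erasure E splits N(S)_E into 2^(2|E| − rank(H) + rank(H_Ē) − rank(H_E)) classes of equal size |S_E|, which is the counting content of the conditional entropy computation H(X | E = v, Σ = y) = 2|v| − rank H + rank H_v̄ − rank H_v.) -/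
open Finset

/-- The symplectic form on `F₂^(Fin n × Fin 2)`. -/
def sympl {n : ℕ} (u v : Fin n × Fin 2 → ZMod 2) : ZMod 2 :=
  ∑ i : Fin n, (u (i, 0) * v (i, 1) + u (i, 1) * v (i, 0))

/-- A stabilizer matrix: rows are pairwise orthogonal for the symplectic form. -/
def IsStabilizerMatrix {ρ : Type*} {n : ℕ} (H : Matrix ρ (Fin n × Fin 2) (ZMod 2)) : Prop :=
  ∀ a b : ρ, sympl (H a) (H b) = 0

/-- The support of a Pauli error. -/
def psupp {n : ℕ} (w : Fin n × Fin 2 → ZMod 2) : Finset (Fin n) :=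
  Finset.univ.filter fun i => ¬(w (i, 0) = 0 ∧ w (i, 1) = 0)

/-- The syndrome of a Pauli error. -/
def syndrome {ρ : Type*} {n : ℕ} (H : Matrix ρ (Fin n × Fin 2) (ZMod 2))
    (w : Fin n × Fin 2 → ZMod 2) : ρ → ZMod 2 :=
  fun a => sympl (H a) w

/-- The row space `S` of a stabilizer matrix. -/
def rowSpace {ρ : Type*} {n : ℕ} (H : Matrix ρ (Fin n × Fin 2) (ZMod 2)) :
    Submodule (ZMod 2) (Fin n × Fin 2 → ZMod 2) :=
  Submodule.span (ZMod 2) (Set.range fun a => H a)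

/-- The matrix `H_E`: columns outside the erasure `E` are replaced by zero
(this does not change the rank, so `(erased H E).rank` is the rank of the submatrix
of erased columns). -/
def erased {ρ : Type*} {n : ℕ} (H : Matrix ρ (Fin n × Fin 2) (ZMod 2)) (E : Finset (Fin n)) :
    Matrix ρ (Fin n × Fin 2) (ZMod 2) :=
  Matrix.of fun a p => if p.1 ∈ E then H a p else 0

/-- The decoding error probability of a decoder `D` over the quantum erasure channel
of probability `p`. -/
noncomputable def errProb {ρ : Type*} [Fintype ρ] {n : ℕ}
    (H : Matrix ρ (Fin n × Fin 2) (ZMod 2)) (p : ℝ)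
    (D : Finset (Fin n) → (ρ → ZMod 2) → ((Fin n × Fin 2 → ZMod 2) ⧸ rowSpace H)) : ℝ :=
  ∑ E : Finset (Fin n), p ^ E.card * (1 - p) ^ (n - E.card) *
    ((Nat.card {w : Fin n × Fin 2 → ZMod 2 |
        psupp w ⊆ E ∧ D E (syndrome H w) ≠ Submodule.Quotient.mk w} : ℝ) / 4 ^ E.card)

/-- `E_p[rank(H_Ē) − rank(H_E)]`. -/
noncomputable def rankDiffExp {ρ : Type*} [Fintype ρ] {n : ℕ}
    (H : Matrix ρ (Fin n × Fin 2) (ZMod 2)) (p : ℝ) : ℝ :=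
  ∑ E : Finset (Fin n), p ^ E.card * (1 - p) ^ (n - E.card) *
    (((erased H Eᶜ).rank : ℝ) - ((erased H E).rank : ℝ))

section Aux
open Matrix Module

-- swap equiv
def sw (n : ℕ) : Fin n × Fin 2 ≃ Fin n × Fin 2 :=
  Function.Involutive.toPerm (fun p => (p.1, p.2 + 1)) (fun p => by
    rcases p with ⟨i, j⟩
    fin_cases j <;> rfl)

lemma sw_apply {n : ℕ} (p : Fin n × Fin 2) : sw n p = (p.1, p.2 + 1) := rfl

lemma mulVec_sw_eq {r n : ℕ} (H : Matrix (Fin r) (Fin n × Fin 2) (ZMod 2))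
    (w : Fin n × Fin 2 → ZMod 2) :
    (H.submatrix _root_.id (sw n)).mulVec w = syndrome H w := by
  funext a
  simp only [Matrix.mulVec, dotProduct, Matrix.submatrix_apply, id_eq, syndrome, sympl,
    sw_apply]
  rw [Fintype.sum_prod_type]
  refine Finset.sum_congr rfl fun i _ => ?_
  rw [Fin.sum_univ_two]
  show H a (i, 1) * w (i, 0) + H a (i, 0) * w (i, 1) = _
  ring

lemma rank_submatrix_id_equiv {m c R : Type*} [Fintype c] [Fintype m] [Field R]
    (A : Matrix m c R) (e : c ≃ c) : (A.submatrix _root_.id ⇑e).rank = A.rank := by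
  rw [Matrix.rank_eq_finrank_span_cols, Matrix.rank_eq_finrank_span_cols]
  have h : Set.range (A.submatrix _root_.id ⇑e).col = Set.range A.col :=
    Function.Surjective.range_comp e.surjective A.col
  rw [h]

def maskC (n : ℕ) (E : Finset (Fin n)) :
    (Fin n × Fin 2 → ZMod 2) →ₗ[ZMod 2] (Fin n × Fin 2 → ZMod 2) where
  toFun w := fun p => if p.1 ∈ E then 0 else w p
  map_add' u v := by funext p; by_cases h : p.1 ∈ E <;> simp [h]
  map_smul' c u := by funext p; by_cases h : p.1 ∈ E <;> simp [h]

lemma mem_WE {n : ℕ} {E : Finset (Fin n)} {w : Fin n × Fin 2 → ZMod 2} :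
    w ∈ LinearMap.ker (maskC n E) ↔ ∀ p : Fin n × Fin 2, p.1 ∉ E → w p = 0 := by
  simp only [LinearMap.mem_ker, maskC, LinearMap.coe_mk, AddHom.coe_mk, funext_iff,
    Pi.zero_apply]
  constructor
  · intro h p hp
    have := h p
    rwa [if_neg hp] at this
  · intro h p
    by_cases hp : p.1 ∈ E
    · rw [if_pos hp]
    · rw [if_neg hp]; exact h p hp

lemma psupp_subset_iff {n : ℕ} {E : Finset (Fin n)} {w : Fin n × Fin 2 → ZMod 2} :
    psupp w ⊆ E ↔ ∀ p : Fin n × Fin 2, p.1 ∉ E → w p = 0 := by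
  constructor
  · intro h p hp
    rcases p with ⟨i, j⟩
    have hi : i ∉ psupp w := fun hmem => hp (h hmem)
    simp only [psupp, Finset.mem_filter, Finset.mem_univ, true_and, not_not] at hi
    fin_cases j
    · exact hi.1
    · exact hi.2
  · intro h i hi
    simp only [psupp, Finset.mem_filter, Finset.mem_univ, true_and] at hi
    by_contra hiE
    exact hi ⟨h (i, 0) hiE, h (i, 1) hiE⟩

noncomputable def weEquiv (n : ℕ) (E : Finset (Fin n)) :
    LinearMap.ker (maskC n E) ≃ₗ[ZMod 2] ({p : Fin n × Fin 2 // p.1 ∈ E} → ZMod 2) where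
  toFun w := fun q => w.1 q.1
  map_add' u v := rfl
  map_smul' c u := rfl
  invFun f := ⟨fun p => if h : p.1 ∈ E then f ⟨p, h⟩ else 0, by
    rw [mem_WE]; intro p hp; rw [dif_neg hp]⟩
  left_inv w := by
    apply Subtype.ext
    funext p
    by_cases h : p.1 ∈ E
    · simp [h]
    · simp only [dif_neg h]
      exact (mem_WE.mp w.2 p h).symm
  right_inv f := by funext q; simp [q.2]

lemma finrank_WE (n : ℕ) (E : Finset (Fin n)) :
    Module.finrank (ZMod 2) (LinearMap.ker (maskC n E)) = 2 * E.card := by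
  rw [(weEquiv n E).finrank_eq, Module.finrank_fintype_fun_eq_card, Fintype.card_subtype]
  have : Finset.univ.filter (fun p : Fin n × Fin 2 => p.1 ∈ E) = E ×ˢ Finset.univ := by
    ext ⟨i, j⟩; simp
  rw [this, Finset.card_product]
  simp [mul_comm]

lemma natCard_submodule {n : ℕ} (p : Submodule (ZMod 2) (Fin n × Fin 2 → ZMod 2)) :
    Nat.card p = 2 ^ Module.finrank (ZMod 2) p := by
  have : Fintype p := Fintype.ofFinite p
  rw [Nat.card_eq_fintype_card, card_eq_pow_finrank (K := ZMod 2), ZMod.card]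

lemma keyN {r n : ℕ} (H : Matrix (Fin r) (Fin n × Fin 2) (ZMod 2)) (E : Finset (Fin n)) :
    (erased H E).rank + Module.finrank (ZMod 2)
      ↥(LinearMap.ker (H.submatrix _root_.id ⇑(sw n)).mulVecLin ⊓ LinearMap.ker (maskC n E)) =
      2 * E.card := by
  classical
  let A := H.submatrix _root_.id ⇑(sw n)
  let B := (erased H E).submatrix _root_.id ⇑(sw n)
  let W := LinearMap.ker (maskC n E)
  let σ' := A.mulVecLin.domRestrict W
  let z : (Fin n × Fin 2 → ZMod 2) → (Fin n × Fin 2 → ZMod 2) :=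
    fun u p => if p.1 ∈ E then u p else 0
  have hz : ∀ u, z u ∈ W := by
    intro u
    rw [mem_WE]
    intro p hp
    show (if p.1 ∈ E then u p else 0) = 0
    exact if_neg hp
  have hzW : ∀ w ∈ W, z w = w := by
    intro w hw
    funext p
    show (if p.1 ∈ E then w p else 0) = w p
    by_cases hp : p.1 ∈ E
    · exact if_pos hp
    · rw [if_neg hp, mem_WE.mp hw p hp]
  have hBz : ∀ u, B.mulVec u = B.mulVec (z u) := by
    intro u
    funext a
    refine Finset.sum_congr rfl fun p _ => ?_
    by_cases hp : p.1 ∈ E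
    · simp only [z, if_pos hp]
    · have hB : B a p = 0 := by
        simp only [B, Matrix.submatrix_apply, erased, Matrix.of_apply, sw_apply]
        exact if_neg hp
      simp [hB]
  have hABz : ∀ u, A.mulVec (z u) = B.mulVec (z u) := by
    intro u
    funext a
    refine Finset.sum_congr rfl fun p _ => ?_
    by_cases hp : p.1 ∈ E
    · simp only [A, B, Matrix.submatrix_apply, erased, Matrix.of_apply, sw_apply, if_pos hp]
    · simp only [z, if_neg hp, mul_zero]
  have range_eq : LinearMap.range σ' = LinearMap.range B.mulVecLin := by
    apply le_antisymm
    · rintro v ⟨⟨w, hw⟩, rfl⟩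
      refine ⟨w, ?_⟩
      show B.mulVec w = A.mulVec w
      conv_lhs => rw [← hzW w hw]
      conv_rhs => rw [← hzW w hw]
      exact (hABz w).symm
    · rintro v ⟨u, rfl⟩
      refine ⟨⟨z u, hz u⟩, ?_⟩
      show A.mulVec (z u) = B.mulVec u
      rw [hABz u, ← hBz u]
  have hrn := LinearMap.finrank_range_add_finrank_ker σ'
  have hr : Module.finrank (ZMod 2) (LinearMap.range σ') = (erased H E).rank := by
    rw [range_eq]
    exact rank_submatrix_id_equiv (erased H E) (sw n)
  have hk : Module.finrank (ZMod 2) (LinearMap.ker σ')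
      = Module.finrank (ZMod 2) ↥(LinearMap.ker A.mulVecLin ⊓ W) := by
    rw [LinearMap.ker_domRestrict]
    have he : Submodule.comap W.subtype (LinearMap.ker A.mulVecLin)
        = Submodule.comap W.subtype (LinearMap.ker A.mulVecLin ⊓ W) := by
      ext x
      simp [Submodule.mem_comap, Submodule.mem_inf, x.2]
    rw [he]
    exact (Submodule.comapSubtypeEquivOfLe inf_le_right).finrank_eq
  rw [hr, hk, finrank_WE] at hrn
  exact hrn

lemma keyS {r n : ℕ} (H : Matrix (Fin r) (Fin n × Fin 2) (ZMod 2)) (E : Finset (Fin n)) :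
    (erased H Eᶜ).rank + Module.finrank (ZMod 2)
      ↥(rowSpace H ⊓ LinearMap.ker (maskC n E)) = H.rank := by
  classical
  let S := rowSpace H
  let π' := (maskC n E).domRestrict S
  have hrn := LinearMap.finrank_range_add_finrank_ker π'
  have hrange : LinearMap.range π' = Submodule.span (ZMod 2) (Set.range (erased H Eᶜ)) := by
    rw [LinearMap.range_domRestrict]
    show Submodule.map (maskC n E) (Submodule.span _ _) = _
    rw [Submodule.map_span, ← Set.range_comp]
    congr 1
    have hfe : ⇑(maskC n E) ∘ (fun a => H a) = fun a => erased H Eᶜ a := by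
      funext a
      funext p
      show (if p.1 ∈ E then 0 else H a p) = (if p.1 ∈ Eᶜ then H a p else 0)
      by_cases hp : p.1 ∈ E <;> simp [hp]
    rw [hfe]
  have hr : Module.finrank (ZMod 2) (LinearMap.range π') = (erased H Eᶜ).rank := by
    rw [hrange]
    exact (Matrix.rank_eq_finrank_span_row (erased H Eᶜ)).symm
  have hk : Module.finrank (ZMod 2) (LinearMap.ker π')
      = Module.finrank (ZMod 2) ↥(S ⊓ LinearMap.ker (maskC n E)) := by
    rw [LinearMap.ker_domRestrict]
    have he : Submodule.comap S.subtype (LinearMap.ker (maskC n E))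
        = Submodule.comap S.subtype (S ⊓ LinearMap.ker (maskC n E)) := by
      ext x
      simp [Submodule.mem_comap, Submodule.mem_inf, x.2]
    rw [he]
    exact (Submodule.comapSubtypeEquivOfLe inf_le_left).finrank_eq
  have hS : Module.finrank (ZMod 2) S = H.rank :=
    (Matrix.rank_eq_finrank_span_row H).symm
  rw [hr, hk, hS] at hrn
  exact hrn

lemma maskC_eq_zero_iff {n : ℕ} {E : Finset (Fin n)} {w : Fin n × Fin 2 → ZMod 2} :
    maskC n E w = 0 ↔ ∀ p : Fin n × Fin 2, p.1 ∉ E → w p = 0 :=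
  mem_WE

lemma natCard_submodule' {n : ℕ} (p : Submodule (ZMod 2) (Fin n × Fin 2 → ZMod 2)) :
    Nat.card ↥((p : Set (Fin n × Fin 2 → ZMod 2))) = 2 ^ Module.finrank (ZMod 2) p :=
  natCard_submodule p

end Aux

theorem counting_zero_syndrome_errors_covered_by_erasure
    {r n : ℕ} (H : Matrix (Fin r) (Fin n × Fin 2) (ZMod 2))
    (hH : IsStabilizerMatrix H) (E : Finset (Fin n)) :
    H.rank + (erased H E).rank ≤ 2 * E.card + (erased H Eᶜ).rank ∧
    Nat.card {w : Fin n × Fin 2 → ZMod 2 | syndrome H w = 0 ∧ psupp w ⊆ E} =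
      2 ^ (2 * E.card + (erased H Eᶜ).rank - (H.rank + (erased H E).rank)) *
        Nat.card {w : Fin n × Fin 2 → ZMod 2 | w ∈ rowSpace H ∧ psupp w ⊆ E} := by
  classical
  have hσ : ∀ w, (H.submatrix _root_.id ⇑(sw n)).mulVecLin w = syndrome H w :=
    fun w => mulVec_sw_eq H w
  have hNset : {w : Fin n × Fin 2 → ZMod 2 | syndrome H w = 0 ∧ psupp w ⊆ E}
      = ↑(LinearMap.ker (H.submatrix _root_.id ⇑(sw n)).mulVecLin ⊓ LinearMap.ker (maskC n E)) := by
    ext w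
    simp only [Set.mem_setOf_eq, SetLike.mem_coe, Submodule.mem_inf, LinearMap.mem_ker, hσ,
      mem_WE, maskC_eq_zero_iff, psupp_subset_iff]
  have hSset : {w : Fin n × Fin 2 → ZMod 2 | w ∈ rowSpace H ∧ psupp w ⊆ E}
      = ↑(rowSpace H ⊓ LinearMap.ker (maskC n E)) := by
    ext w
    simp only [Set.mem_setOf_eq, SetLike.mem_coe, Submodule.mem_inf, mem_WE, maskC_eq_zero_iff, psupp_subset_iff]
  have hN := keyN H E
  have hS := keyS H E
  have hle : rowSpace H ⊓ LinearMap.ker (maskC n E)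
      ≤ LinearMap.ker (H.submatrix _root_.id ⇑(sw n)).mulVecLin ⊓ LinearMap.ker (maskC n E) := by
    refine inf_le_inf_right _ ?_
    rw [rowSpace, Submodule.span_le]
    rintro _ ⟨a, rfl⟩
    simp only [SetLike.mem_coe, LinearMap.mem_ker, hσ]
    funext b
    exact hH b a
  have hfin := Submodule.finrank_mono hle
  constructor
  · omega
  · rw [hNset, hSset, natCard_submodule', natCard_submodule', ← pow_add]
    congr 1
    omega
end

section
/- (Theorem: combinatorial capacity bound for stabilizer codes.) Let p ∈ [0,1] and let (H_t) be a sequence of stabilizer matrices with qubit numbers n_t → ∞ and rates R_t = 1 − rank(H_t)/n_t. Suppose R_t → R and there exist decoders D_t for the quantum erasure channel of probability p whose decoding error probabilities tend to 0 as t → ∞. Then R ≤ 1 − 2p − D(p), where D(p) = limsup_t Δ_t(p) and Δ_t(p) = E_p[rank((H_t)_Ē) − rank((H_t)_E)]/n_t. -/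
open Finset

section Aux

open Module

variable {ρ : Type*} [Fintype ρ] {n : ℕ}

/-- Errors supported in `E`, as a submodule. -/
def VE {n : ℕ} (E : Finset (Fin n)) : Submodule (ZMod 2) (Fin n × Fin 2 → ZMod 2) where
  carrier := {w | ∀ p : Fin n × Fin 2, p.1 ∉ E → w p = 0}
  add_mem' := by intro a b ha hb p hp; simp only [Pi.add_apply, ha p hp, hb p hp, add_zero]
  zero_mem' := by intro p hp; rfl
  smul_mem' := by intro c a ha p hp; simp only [Pi.smul_apply, ha p hp, smul_zero]

lemma mem_VE_iff {E : Finset (Fin n)} {w : Fin n × Fin 2 → ZMod 2} :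
    w ∈ VE E ↔ psupp w ⊆ E := by
  constructor
  · intro h i hi
    simp only [psupp, mem_filter, mem_univ, true_and] at hi
    by_contra hE
    exact hi ⟨h (i, 0) hE, h (i, 1) hE⟩
  · intro h p hp
    by_contra hw
    apply hp
    apply h
    simp only [psupp, mem_filter, mem_univ, true_and]
    obtain ⟨i, j⟩ := p
    fin_cases j <;> tauto

noncomputable def veEquiv (E : Finset (Fin n)) :
    VE E ≃ ({p : Fin n × Fin 2 // p.1 ∈ E} → ZMod 2) where
  toFun w q := w.1 q.1
  invFun f := ⟨fun p => if h : p.1 ∈ E then f ⟨p, h⟩ else 0, fun p hp => dif_neg hp⟩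
  left_inv w := by
    apply Subtype.ext
    funext p
    by_cases h : p.1 ∈ E
    · simp [h]
    · simp [h, w.2 p h]
  right_inv f := by funext q; simp [q.2]

lemma card_VE (E : Finset (Fin n)) : Nat.card (VE E) = 4 ^ E.card := by
  classical
  rw [Nat.card_congr (veEquiv E), Nat.card_fun]
  have e2 : {p : Fin n × Fin 2 // p.1 ∈ E} ≃ {i : Fin n // i ∈ E} × Fin 2 :=
    { toFun := fun q => (⟨q.1.1, q.2⟩, q.1.2)
      invFun := fun x => ⟨(x.1.1, x.2), x.1.2⟩
      left_inv := fun q => rfl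
      right_inv := fun x => rfl }
  rw [Nat.card_congr e2, Nat.card_prod]
  have : Nat.card {i : Fin n // i ∈ E} = E.card := by
    rw [Nat.card_eq_fintype_card, Fintype.card_coe]
  rw [this]
  have : Nat.card (ZMod 2) = 2 := by rw [Nat.card_eq_fintype_card, ZMod.card]
  rw [this]
  have : Nat.card (Fin 2) = 2 := by simp
  rw [this]
  rw [show (4 : ℕ) = 2 ^ 2 by norm_num, ← pow_mul, mul_comm]

lemma card_supp_subset (E : Finset (Fin n)) :
    Nat.card {w : Fin n × Fin 2 → ZMod 2 | psupp w ⊆ E} = 4 ^ E.card := by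
  rw [← card_VE E]
  apply Nat.card_congr
  exact (Equiv.setCongr (by ext w; simp [mem_VE_iff, SetLike.mem_coe])).symm

lemma card_submodule {m : Type*} [Fintype m] (U : Submodule (ZMod 2) (m → ZMod 2)) :
    Nat.card U = 2 ^ finrank (ZMod 2) U := by
  have : Fintype U := Fintype.ofFinite U
  rw [Nat.card_eq_fintype_card, card_eq_pow_finrank (K := ZMod 2), ZMod.card]

end Aux

section Aux2

open Module

variable {ρ : Type*} [Fintype ρ] {n : ℕ}

/-- The linear map erasing coordinates outside `E`. -/
def eraseMap {n : ℕ} (E : Finset (Fin n)) :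
    (Fin n × Fin 2 → ZMod 2) →ₗ[ZMod 2] (Fin n × Fin 2 → ZMod 2) where
  toFun y := fun p => if p.1 ∈ E then y p else 0
  map_add' a b := by funext p; by_cases h : p.1 ∈ E <;> simp [h]
  map_smul' c a := by funext p; by_cases h : p.1 ∈ E <;> simp [h]

lemma rowSpace_erased (H : Matrix ρ (Fin n × Fin 2) (ZMod 2)) (E : Finset (Fin n)) :
    rowSpace (erased H E) = (rowSpace H).map (eraseMap E) := by
  unfold rowSpace
  rw [Submodule.map_span]
  congr 1
  rw [← Set.range_comp]
  rfl

lemma finrank_rowSpace (H : Matrix ρ (Fin n × Fin 2) (ZMod 2)) :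
    finrank (ZMod 2) (rowSpace H) = H.rank :=
  (Matrix.rank_eq_finrank_span_row H).symm

lemma rank_erased_le (H : Matrix ρ (Fin n × Fin 2) (ZMod 2)) (E : Finset (Fin n)) :
    (erased H E).rank ≤ H.rank := by
  rw [← finrank_rowSpace, ← finrank_rowSpace, rowSpace_erased]
  exact Submodule.finrank_map_le _ _

lemma matrix_rank_add_le (A B : Matrix ρ (Fin n × Fin 2) (ZMod 2)) :
    (A + B).rank ≤ A.rank + B.rank := by
  rw [Matrix.rank_eq_finrank_span_row, Matrix.rank_eq_finrank_span_row,
    Matrix.rank_eq_finrank_span_row]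
  refine le_trans (Submodule.finrank_mono ?_)
    (Submodule.finrank_add_le_finrank_add_finrank _ _)
  rw [Submodule.span_le]
  rintro _ ⟨a, rfl⟩
  exact Submodule.add_mem _
    (Submodule.mem_sup_left (Submodule.subset_span ⟨a, rfl⟩))
    (Submodule.mem_sup_right (Submodule.subset_span ⟨a, rfl⟩))

lemma rank_compl_le (H : Matrix ρ (Fin n × Fin 2) (ZMod 2)) (E : Finset (Fin n)) :
    (erased H Eᶜ).rank ≤ H.rank + (erased H E).rank := by
  have hsum : erased H Eᶜ = H + erased H E := by
    funext a p
    simp only [erased, Matrix.of_apply, Matrix.add_apply, Finset.mem_compl]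
    by_cases h : p.1 ∈ E
    · simp [h, CharTwo.add_self_eq_zero]
    · simp [h]
  rw [hsum]
  exact matrix_rank_add_le _ _

set_option synthInstance.maxHeartbeats 1000000 in
lemma card_W_mul (H : Matrix ρ (Fin n × Fin 2) (ZMod 2)) (E : Finset (Fin n)) :
    Nat.card (rowSpace H ⊓ VE E : Submodule (ZMod 2) (Fin n × Fin 2 → ZMod 2))
      * 2 ^ (erased H Eᶜ).rank ≤ 2 ^ H.rank := by
  classical
  set S := rowSpace H
  set W : Submodule (ZMod 2) (Fin n × Fin 2 → ZMod 2) := S ⊓ VE E with hW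
  let f : S →ₗ[ZMod 2] (Fin n × Fin 2 → ZMod 2) := (eraseMap Eᶜ).domRestrict S
  have hrange : finrank (ZMod 2) (LinearMap.range f) = (erased H Eᶜ).rank := by
    rw [LinearMap.range_domRestrict, ← rowSpace_erased, finrank_rowSpace]
  have hWle : W ≤ S := inf_le_left
  have hker : Submodule.comap S.subtype W ≤ LinearMap.ker f := by
    rintro ⟨x, hxS⟩ hx
    simp only [Submodule.mem_comap, Submodule.subtype_apply] at hx
    have hxV : x ∈ VE E := hx.2
    simp only [LinearMap.mem_ker]
    funext p
    simp only [f, LinearMap.domRestrict_apply, eraseMap, LinearMap.coe_mk, AddHom.coe_mk]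
    by_cases h : p.1 ∈ Eᶜ
    · simp only [h, if_true]
      exact hxV p (Finset.mem_compl.mp h)
    · simp [h]
  have hfr : finrank (ZMod 2) W + (erased H Eᶜ).rank ≤ finrank (ZMod 2) S := by
    have h1 : finrank (ZMod 2) W = finrank (ZMod 2) (Submodule.comap S.subtype W) :=
      (Submodule.comapSubtypeEquivOfLe hWle).finrank_eq.symm
    have h2 : finrank (ZMod 2) (Submodule.comap S.subtype W)
        ≤ finrank (ZMod 2) (LinearMap.ker f) := Submodule.finrank_mono hker
    have h3 := LinearMap.finrank_range_add_finrank_ker f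
    omega
  rw [card_submodule W, ← pow_add]
  rw [finrank_rowSpace] at hfr
  exact pow_le_pow_right₀ (by norm_num) hfr

end Aux2

section Aux3

set_option linter.unusedSectionVars false
set_option maxHeartbeats 1000000
set_option synthInstance.maxHeartbeats 1000000

open Module

variable {ρ : Type*} [Fintype ρ] {n : ℕ}

lemma syndrome_eq_mulVec (H : Matrix ρ (Fin n × Fin 2) (ZMod 2)) {E : Finset (Fin n)}
    {w : Fin n × Fin 2 → ZMod 2} (hw : w ∈ VE E) :
    syndrome H w = (erased H E).mulVecLin (fun p => w (p.1, p.2 + 1)) := by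
  funext a
  simp only [Matrix.mulVecLin_apply, Matrix.mulVec, dotProduct, syndrome, sympl]
  rw [Fintype.sum_prod_type]
  refine Finset.sum_congr rfl fun i _ => ?_
  rw [Fin.sum_univ_two]
  by_cases h : i ∈ E
  · simp only [erased, Matrix.of_apply, h, if_true]
    have h1 : ((0 : Fin 2) + 1) = 1 := rfl
    have h2 : ((1 : Fin 2) + 1) = 0 := rfl
    rw [h1, h2]
  · have h0 : w (i, 0) = 0 := hw (i, 0) h
    have h1 : w (i, 1) = 0 := hw (i, 1) h
    simp [erased, h, h0, h1]

lemma succ_card_le (H : Matrix ρ (Fin n × Fin 2) (ZMod 2))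
    (D : Finset (Fin n) → (ρ → ZMod 2) → ((Fin n × Fin 2 → ZMod 2) ⧸ rowSpace H))
    (E : Finset (Fin n)) :
    Nat.card {w : Fin n × Fin 2 → ZMod 2 |
        psupp w ⊆ E ∧ D E (syndrome H w) = Submodule.Quotient.mk w}
      ≤ 2 ^ (erased H E).rank
        * Nat.card (rowSpace H ⊓ VE E : Submodule (ZMod 2) (Fin n × Fin 2 → ZMod 2)) := by
  classical
  set T : Set (Fin n × Fin 2 → ZMod 2) :=
    {w | psupp w ⊆ E ∧ D E (syndrome H w) = Submodule.Quotient.mk w} with hT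
  set W : Submodule (ZMod 2) (Fin n × Fin 2 → ZMod 2) := rowSpace H ⊓ VE E with hWdef
  set σim : Set (ρ → ZMod 2) := syndrome H '' T with hσim
  have hrepex : ∀ s : σim, ∃ v, v ∈ T ∧ syndrome H v = (s : ρ → ZMod 2) := by
    rintro ⟨s, w, hw, rfl⟩
    exact ⟨w, hw, rfl⟩
  choose rep hrepT hrepσ using hrepex
  have hmem : ∀ (w : Fin n × Fin 2 → ZMod 2) (hw : w ∈ T),
      w - rep ⟨syndrome H w, ⟨w, hw, rfl⟩⟩ ∈ W := by
    intro w hw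
    set s : σim := ⟨syndrome H w, ⟨w, hw, rfl⟩⟩ with hs
    have hrT := hrepT s
    have hrσ : syndrome H (rep s) = syndrome H w := hrepσ s
    refine Submodule.mem_inf.mpr ⟨?_, ?_⟩
    · have h1 : D E (syndrome H w) = Submodule.Quotient.mk w := hw.2
      have h2 : D E (syndrome H w) = Submodule.Quotient.mk (rep s) := by
        rw [← hrσ]; exact hrT.2
      exact (Submodule.Quotient.eq _).mp (h1 ▸ h2 ▸ rfl)
    · exact Submodule.sub_mem _ (mem_VE_iff.mpr hw.1) (mem_VE_iff.mpr (hrepT s).1)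
  let F : T → σim × W := fun w =>
    (⟨syndrome H w, ⟨w, w.2, rfl⟩⟩, ⟨(w : Fin n × Fin 2 → ZMod 2) - rep ⟨syndrome H w, ⟨w, w.2, rfl⟩⟩,
      hmem w w.2⟩)
  have hF : Function.Injective F := by
    rintro ⟨w, hw⟩ ⟨v, hv⟩ h
    have h1 : (F ⟨w, hw⟩).1 = (F ⟨v, hv⟩).1 := by rw [h]
    have h2 : ((F ⟨w, hw⟩).2 : Fin n × Fin 2 → ZMod 2)
        = ((F ⟨v, hv⟩).2 : Fin n × Fin 2 → ZMod 2) := by rw [h]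
    simp only [F] at h1 h2
    have h3 : (⟨syndrome H w, ⟨w, hw, rfl⟩⟩ : σim) = ⟨syndrome H v, ⟨v, hv, rfl⟩⟩ := h1
    rw [h3] at h2
    apply Subtype.ext
    exact sub_left_injective h2
  have hcard : Nat.card T ≤ Nat.card (σim × W) := Nat.card_le_card_of_injective F hF
  rw [Nat.card_prod] at hcard
  have hσ : Nat.card σim ≤ 2 ^ (erased H E).rank := by
    have hsub : σim ⊆ (LinearMap.range (erased H E).mulVecLin : Set (ρ → ZMod 2)) := by
      rintro _ ⟨w, hw, rfl⟩
      exact ⟨fun p => w (p.1, p.2 + 1),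
        (syndrome_eq_mulVec H (mem_VE_iff.mpr hw.1)).symm⟩
    have hle := Set.ncard_le_ncard hsub (Set.toFinite _)
    rw [← Nat.card_coe_set_eq, ← Nat.card_coe_set_eq] at hle
    refine hle.trans ?_
    have : Nat.card (LinearMap.range (erased H E).mulVecLin :
        Submodule (ZMod 2) (ρ → ZMod 2)) = 2 ^ (erased H E).rank := by
      rw [card_submodule]
      rfl
    exact le_of_eq this
  calc Nat.card T ≤ Nat.card σim * Nat.card W := hcard
    _ ≤ 2 ^ (erased H E).rank * Nat.card W := Nat.mul_le_mul_right _ hσ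

lemma fail_succ_card (H : Matrix ρ (Fin n × Fin 2) (ZMod 2))
    (D : Finset (Fin n) → (ρ → ZMod 2) → ((Fin n × Fin 2 → ZMod 2) ⧸ rowSpace H))
    (E : Finset (Fin n)) :
    Nat.card {w : Fin n × Fin 2 → ZMod 2 |
        psupp w ⊆ E ∧ D E (syndrome H w) ≠ Submodule.Quotient.mk w}
      + Nat.card {w : Fin n × Fin 2 → ZMod 2 |
        psupp w ⊆ E ∧ D E (syndrome H w) = Submodule.Quotient.mk w} = 4 ^ E.card := by
  classical
  rw [← card_supp_subset E]
  set A := {w : Fin n × Fin 2 → ZMod 2 |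
    psupp w ⊆ E ∧ D E (syndrome H w) ≠ Submodule.Quotient.mk w}
  set B := {w : Fin n × Fin 2 → ZMod 2 |
    psupp w ⊆ E ∧ D E (syndrome H w) = Submodule.Quotient.mk w}
  have hu : A ∪ B = {w | psupp w ⊆ E} := by
    ext w
    by_cases h : D E (syndrome H w) = Submodule.Quotient.mk w <;>
      simp [A, B, Set.mem_union, h] <;> tauto
  have hd : Disjoint A B := Set.disjoint_left.mpr fun w h1 h2 => h1.2 h2.2
  rw [← hu, Nat.card_coe_set_eq, Nat.card_coe_set_eq, Nat.card_coe_set_eq,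
    Set.ncard_union_eq hd (Set.toFinite _) (Set.toFinite _)]

end Aux3

section Aux4

lemma bin_one (m : ℕ) (p : ℝ) :
    ∑ k ∈ Finset.range (m + 1), (m.choose k : ℝ) * (p ^ k * (1 - p) ^ (m - k)) = 1 := by
  have h : ∑ k ∈ Finset.range (m + 1), (m.choose k : ℝ) * (p ^ k * (1 - p) ^ (m - k))
      = (p + (1 - p)) ^ m := by
    rw [add_pow]
    refine Finset.sum_congr rfl fun k _ => ?_
    ring
  rw [h]
  norm_num

lemma sum_card_fun {n : ℕ} (f : ℕ → ℝ) :
    ∑ E : Finset (Fin n), f E.card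
      = ∑ k ∈ Finset.range (n + 1), (n.choose k : ℝ) * f k := by
  classical
  rw [← Finset.powerset_univ, Finset.sum_powerset]
  rw [Finset.card_univ, Fintype.card_fin]
  refine Finset.sum_congr rfl fun k _ => ?_
  have := Finset.sum_powersetCard k (Finset.univ : Finset (Fin n)) f
  rw [this, Finset.card_univ, Fintype.card_fin, nsmul_eq_mul]

lemma sum_prob {n : ℕ} (p : ℝ) :
    ∑ E : Finset (Fin n), p ^ E.card * (1 - p) ^ (n - E.card) = 1 := by
  rw [sum_card_fun (f := fun k => p ^ k * (1 - p) ^ (n - k))]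
  exact bin_one n p

lemma sum_prob_card {n : ℕ} (p : ℝ) :
    ∑ E : Finset (Fin n), p ^ E.card * (1 - p) ^ (n - E.card) * E.card = n * p := by
  rw [sum_card_fun (f := fun k => p ^ k * (1 - p) ^ (n - k) * k)]
  cases n with
  | zero => simp
  | succ m =>
    rw [Finset.sum_range_succ']
    simp only [Nat.cast_zero, mul_zero, add_zero]
    have key : ∀ j ∈ Finset.range (m + 1),
        ((m + 1).choose (j + 1) : ℝ) * (p ^ (j + 1) * (1 - p) ^ (m + 1 - (j + 1)) * (j + 1))
        = ((m : ℝ) + 1) * p * ((m.choose j : ℝ) * (p ^ j * (1 - p) ^ (m - j))) := by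
      intro j _
      have hnat : (m + 1) * m.choose j = (m + 1).choose (j + 1) * (j + 1) :=
        Nat.add_one_mul_choose_eq m j
      have hcast : ((m : ℝ) + 1) * (m.choose j : ℝ)
          = ((m + 1).choose (j + 1) : ℝ) * ((j : ℝ) + 1) := by
        have := congrArg (fun x : ℕ => (x : ℝ)) hnat
        push_cast at this
        linarith [this]
      have hexp : m + 1 - (j + 1) = m - j := by omega
      rw [hexp]
      calc ((m + 1).choose (j + 1) : ℝ) * (p ^ (j + 1) * (1 - p) ^ (m - j) * ((j : ℝ) + 1))
          = ((m + 1).choose (j + 1) : ℝ) * ((j : ℝ) + 1) * (p ^ (j + 1) * (1 - p) ^ (m - j)) := by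
            ring
        _ = ((m : ℝ) + 1) * (m.choose j : ℝ) * (p ^ (j + 1) * (1 - p) ^ (m - j)) := by
            rw [← hcast]
        _ = ((m : ℝ) + 1) * p * ((m.choose j : ℝ) * (p ^ j * (1 - p) ^ (m - j))) := by
            rw [pow_succ]
            ring
    simp only [Nat.cast_add, Nat.cast_one]
    rw [Finset.sum_congr rfl key, ← Finset.mul_sum, bin_one m p]
    push_cast
    ring

end Aux4

section Aux5

set_option linter.unusedSectionVars false
set_option maxHeartbeats 1000000
set_option synthInstance.maxHeartbeats 1000000

variable {ρ : Type*} [Fintype ρ] {n : ℕ}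

lemma per_E (H : Matrix ρ (Fin n × Fin 2) (ZMod 2))
    (D : Finset (Fin n) → (ρ → ZMod 2) → ((Fin n × Fin 2 → ZMod 2) ⧸ rowSpace H))
    (E : Finset (Fin n)) :
    2 * (E.card : ℝ) + ((erased H Eᶜ).rank : ℝ) - (H.rank : ℝ) - ((erased H E).rank : ℝ)
      ≤ 4 * (n : ℝ) * ((Nat.card {w : Fin n × Fin 2 → ZMod 2 |
          psupp w ⊆ E ∧ D E (syndrome H w) ≠ Submodule.Quotient.mk w} : ℝ) / 4 ^ E.card) := by
  classical
  set a := (erased H E).rank with ha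
  set b := (erased H Eᶜ).rank with hb
  set r := H.rank with hr
  set k := E.card with hk
  set cW := Nat.card (rowSpace H ⊓ VE E : Submodule (ZMod 2) (Fin n × Fin 2 → ZMod 2)) with hcW
  set sc := Nat.card {w : Fin n × Fin 2 → ZMod 2 |
      psupp w ⊆ E ∧ D E (syndrome H w) = Submodule.Quotient.mk w} with hsc
  set fc := Nat.card {w : Fin n × Fin 2 → ZMod 2 |
      psupp w ⊆ E ∧ D E (syndrome H w) ≠ Submodule.Quotient.mk w} with hfc
  have h1 : sc ≤ 2 ^ a * cW := succ_card_le H D E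
  have h2 : cW * 2 ^ b ≤ 2 ^ r := card_W_mul H E
  have h3 : b ≤ r + a := rank_compl_le H E
  have h4 : fc + sc = 4 ^ k := fail_succ_card H D E
  have h5 : k ≤ n := le_trans (Finset.card_le_univ E) (by simp)
  have h4k : (0 : ℝ) < 4 ^ k := by positivity
  have hfc0 : (0 : ℝ) ≤ fc := Nat.cast_nonneg fc
  by_cases hcase : a + r + 1 ≤ 2 * k + b
  · -- at most half of the errors are decoded correctly
    have hsucc2 : sc * 2 ≤ 4 ^ k := by
      have e1 : sc * 2 ^ b ≤ 2 ^ a * (cW * 2 ^ b) := by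
        calc sc * 2 ^ b ≤ 2 ^ a * cW * 2 ^ b := Nat.mul_le_mul_right _ h1
          _ = 2 ^ a * (cW * 2 ^ b) := by ring
      have e2 : sc * 2 ^ b ≤ 2 ^ (a + r) := by
        rw [pow_add]
        exact e1.trans (Nat.mul_le_mul_left _ h2)
      have e3 : sc * 2 * 2 ^ b ≤ 2 ^ (a + r + 1) := by
        calc sc * 2 * 2 ^ b = sc * 2 ^ b * 2 := by ring
          _ ≤ 2 ^ (a + r) * 2 := Nat.mul_le_mul_right _ e2
          _ = 2 ^ (a + r + 1) := by rw [pow_succ]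
      have e4 : (2 : ℕ) ^ (a + r + 1) ≤ 2 ^ (2 * k + b) := Nat.pow_le_pow_right (by norm_num) hcase
      have e5 : (2 : ℕ) ^ (2 * k + b) = 4 ^ k * 2 ^ b := by
        rw [pow_add, pow_mul]
        norm_num
      have e6 : sc * 2 * 2 ^ b ≤ 4 ^ k * 2 ^ b := by
        rw [← e5]
        exact e3.trans e4
      exact Nat.le_of_mul_le_mul_right e6 (by positivity)
    have hfr : (1 : ℝ) / 2 ≤ (fc : ℝ) / 4 ^ k := by
      rw [div_le_div_iff₀ (by norm_num) h4k]
      have h4' : (fc : ℝ) + sc = 4 ^ k := by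
        have := congrArg (fun x : ℕ => (x : ℝ)) h4
        push_cast at this
        linarith [this]
      have hsucc2' : (sc : ℝ) * 2 ≤ 4 ^ k := by
        have := congrArg (fun x : ℕ => (x : ℝ)) (rfl : sc * 2 = sc * 2)
        have hh : ((sc * 2 : ℕ) : ℝ) ≤ ((4 ^ k : ℕ) : ℝ) := Nat.cast_le.mpr hsucc2
        push_cast at hh
        linarith [hh]
      linarith
    have h7 : 4 * (n : ℝ) * (1 / 2) ≤ 4 * (n : ℝ) * ((fc : ℝ) / 4 ^ k) :=
      mul_le_mul_of_nonneg_left hfr (by positivity)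
    have h3' : (b : ℝ) ≤ (r : ℝ) + a := by exact_mod_cast h3
    have h5' : (k : ℝ) ≤ n := by exact_mod_cast h5
    linarith
  · have hcase' : 2 * k + b ≤ a + r := by omega
    have hcase'' : 2 * (k : ℝ) + b ≤ (a : ℝ) + r := by exact_mod_cast hcase'
    have hrhs : (0 : ℝ) ≤ 4 * (n : ℝ) * ((fc : ℝ) / 4 ^ k) := by positivity
    linarith

lemma per_t (H : Matrix ρ (Fin n × Fin 2) (ZMod 2))
    (D : Finset (Fin n) → (ρ → ZMod 2) → ((Fin n × Fin 2 → ZMod 2) ⧸ rowSpace H))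
    {p : ℝ} (hp0 : 0 ≤ p) (hp1 : p ≤ 1) :
    2 * (n : ℝ) * p + rankDiffExp H p - (H.rank : ℝ) ≤ 4 * (n : ℝ) * errProb H p D := by
  classical
  have hP : ∀ E : Finset (Fin n), (0 : ℝ) ≤ p ^ E.card * (1 - p) ^ (n - E.card) := fun E =>
    mul_nonneg (pow_nonneg hp0 _) (pow_nonneg (by linarith) _)
  have key := Finset.sum_le_sum (s := (Finset.univ : Finset (Finset (Fin n))))
    (f := fun E => p ^ E.card * (1 - p) ^ (n - E.card) *
      (2 * (E.card : ℝ) + ((erased H Eᶜ).rank : ℝ) - (H.rank : ℝ) - ((erased H E).rank : ℝ)))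
    (g := fun E => p ^ E.card * (1 - p) ^ (n - E.card) *
      (4 * (n : ℝ) * ((Nat.card {w : Fin n × Fin 2 → ZMod 2 |
          psupp w ⊆ E ∧ D E (syndrome H w) ≠ Submodule.Quotient.mk w} : ℝ) / 4 ^ E.card)))
    (fun E _ => mul_le_mul_of_nonneg_left (per_E H D E) (hP E))
  have hL : (∑ E : Finset (Fin n), p ^ E.card * (1 - p) ^ (n - E.card) *
      (2 * (E.card : ℝ) + ((erased H Eᶜ).rank : ℝ) - (H.rank : ℝ) - ((erased H E).rank : ℝ)))
      = 2 * (∑ E : Finset (Fin n), p ^ E.card * (1 - p) ^ (n - E.card) * E.card)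
        + rankDiffExp H p
        - (H.rank : ℝ) * (∑ E : Finset (Fin n), p ^ E.card * (1 - p) ^ (n - E.card)) := by
    rw [rankDiffExp, Finset.mul_sum, Finset.mul_sum, ← Finset.sum_add_distrib,
      ← Finset.sum_sub_distrib]
    exact Finset.sum_congr rfl fun E _ => by ring
  have hR : (∑ E : Finset (Fin n), p ^ E.card * (1 - p) ^ (n - E.card) *
      (4 * (n : ℝ) * ((Nat.card {w : Fin n × Fin 2 → ZMod 2 |
          psupp w ⊆ E ∧ D E (syndrome H w) ≠ Submodule.Quotient.mk w} : ℝ) / 4 ^ E.card)))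
      = 4 * (n : ℝ) * errProb H p D := by
    rw [errProb, Finset.mul_sum]
    exact Finset.sum_congr rfl fun E _ => by ring
  rw [hL, hR, sum_prob p, sum_prob_card p, mul_one] at key
  linarith

end Aux5

section Aux6

set_option linter.unusedSectionVars false

variable {ρ : Type*} [Fintype ρ] {n : ℕ}

lemma rank_le_2n (A : Matrix ρ (Fin n × Fin 2) (ZMod 2)) : A.rank ≤ 2 * n := by
  have := Matrix.rank_le_card_width A
  rwa [Fintype.card_prod, Fintype.card_fin, Fintype.card_fin, mul_comm] at this

lemma rde_ge (H : Matrix ρ (Fin n × Fin 2) (ZMod 2)) {p : ℝ} (hp0 : 0 ≤ p) (hp1 : p ≤ 1) :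
    -(2 * (n : ℝ)) ≤ rankDiffExp H p := by
  classical
  have hP : ∀ E : Finset (Fin n), (0 : ℝ) ≤ p ^ E.card * (1 - p) ^ (n - E.card) := fun E =>
    mul_nonneg (pow_nonneg hp0 _) (pow_nonneg (by linarith) _)
  have key : ∑ E : Finset (Fin n), p ^ E.card * (1 - p) ^ (n - E.card) * (-(2 * (n : ℝ)))
      ≤ rankDiffExp H p := by
    rw [rankDiffExp]
    refine Finset.sum_le_sum fun E _ => mul_le_mul_of_nonneg_left ?_ (hP E)
    have ha : ((erased H E).rank : ℝ) ≤ 2 * n := by exact_mod_cast rank_le_2n (erased H E)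
    have hb : (0 : ℝ) ≤ ((erased H Eᶜ).rank : ℝ) := Nat.cast_nonneg _
    linarith
  rw [← Finset.sum_mul, sum_prob p, one_mul] at key
  exact key

end Aux6

open Filter in
theorem capacity_bound_for_stabilizer_codes
    (p : ℝ) (hp : p ∈ Set.Icc (0 : ℝ) 1)
    (nt rt : ℕ → ℕ) (H : ∀ t, Matrix (Fin (rt t)) (Fin (nt t) × Fin 2) (ZMod 2))
    (hstab : ∀ t, IsStabilizerMatrix (H t))
    (hn : Tendsto nt atTop atTop)
    (R : ℝ)
    (hR : Tendsto (fun t => 1 - ((H t).rank : ℝ) / (nt t)) atTop (nhds R))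
    (D : ∀ t, Finset (Fin (nt t)) → (Fin (rt t) → ZMod 2) →
      ((Fin (nt t) × Fin 2 → ZMod 2) ⧸ rowSpace (H t)))
    (hD : Tendsto (fun t => errProb (H t) p (D t)) atTop (nhds 0)) :
    R ≤ 1 - 2 * p - Filter.limsup (fun t => rankDiffExp (H t) p / (nt t)) atTop := by
  obtain ⟨hp0, hp1⟩ := hp
  have hev1 : ∀ᶠ t in atTop, 1 ≤ nt t := hn.eventually_ge_atTop 1
  have hkey : ∀ t, 1 ≤ nt t →
      rankDiffExp (H t) p / (nt t)
        ≤ ((H t).rank : ℝ) / (nt t) - 2 * p + 4 * errProb (H t) p (D t) := by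
    intro t ht
    have hone : (1 : ℝ) ≤ (nt t : ℝ) := by exact_mod_cast ht
    have hpos : (0 : ℝ) < (nt t : ℝ) := by linarith
    have h := per_t (H t) (D t) hp0 hp1
    rw [div_le_iff₀ hpos]
    have expand : (((H t).rank : ℝ) / (nt t) - 2 * p + 4 * errProb (H t) p (D t)) * (nt t)
        = ((H t).rank : ℝ) - 2 * p * (nt t) + 4 * errProb (H t) p (D t) * (nt t) := by
      field_simp
    rw [expand]
    linarith
  have hb2 : ∀ᶠ t in atTop, (-2 : ℝ) ≤ rankDiffExp (H t) p / (nt t) := by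
    refine hev1.mono fun t ht => ?_
    have hone : (1 : ℝ) ≤ (nt t : ℝ) := by exact_mod_cast ht
    have hpos : (0 : ℝ) < (nt t : ℝ) := by linarith
    rw [le_div_iff₀ hpos]
    have h := rde_ge (H t) hp0 hp1
    nlinarith
  have hcb : IsCoboundedUnder (· ≤ ·) atTop (fun t => rankDiffExp (H t) p / (nt t)) :=
    isCoboundedUnder_le_of_eventually_le atTop hb2
  have h1 : Tendsto (fun t => ((H t).rank : ℝ) / (nt t)) atTop (nhds (1 - R)) := by
    have h2 := hR.const_sub (1 : ℝ)
    simp only [sub_sub_cancel] at h2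
    exact h2
  have hu_t : Tendsto (fun t => ((H t).rank : ℝ) / (nt t) - 2 * p + 4 * errProb (H t) p (D t))
      atTop (nhds (1 - R - 2 * p)) := by
    have h2 := (h1.sub_const (2 * p)).add (hD.const_mul (4 : ℝ))
    simpa using h2
  have hblt : IsBoundedUnder (· ≤ ·) atTop
      (fun t => ((H t).rank : ℝ) / (nt t) - 2 * p + 4 * errProb (H t) p (D t)) :=
    hu_t.isBoundedUnder_le
  have hls : limsup (fun t => rankDiffExp (H t) p / (nt t)) atTop ≤ 1 - R - 2 * p := by
    have hle := limsup_le_limsup (hev1.mono hkey) hcb hblt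
    rwa [hu_t.limsup_eq] at hle
  linarith
end

section
/- Let G be a finite simple m-regular graph whose girth is at least δ+2, and let p ∈ [0,1]. Let C be a connected subgraph of G given by a vertex set W and an edge set T ⊆ E(G) with every edge of T joining two vertices of W, such that (W,T) is connected, |T| = k with 0 ≤ k ≤ δ, and W is exactly the set of endpoints of the edges of T when k ≥ 1 (and W is a single vertex when k = 0). Then, under Bernoulli bond percolation with parameter p on G, the probability that (W,T) is a connected component of the open subgraph — i.e., every edge of T is open and every edge of G incident to a vertex of W other than the edges of T is closed — equals (1−p)^m · (p·(1−p)^(m−2))^k. -/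
open Finset
lemma sum_powerset_pow {α} [DecidableEq α] (s : Finset α) (p q : ℝ) :
    ∑ t ∈ s.powerset, p ^ t.card * q ^ (s.card - t.card) = (p + q) ^ s.card := by
  rw [← Finset.prod_const, Finset.prod_add]
  refine Finset.sum_congr rfl fun t ht => ?_
  rw [Finset.mem_powerset] at ht
  rw [Finset.prod_const, Finset.prod_const, Finset.card_sdiff_of_subset ht]

lemma perc_sum {α} [DecidableEq α] (E A B : Finset α) (hA : A ⊆ E) (hB : B ⊆ E)
    (hAB : Disjoint A B) {p q : ℝ} (hpq : p + q = 1) :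
    ∑ F ∈ E.powerset, (if A ⊆ F ∧ ∀ e ∈ B, e ∉ F then p ^ F.card * q ^ (E.card - F.card) else 0)
      = p ^ A.card * q ^ B.card := by
  classical
  rw [← Finset.sum_filter]
  set D := E \ (A ∪ B) with hD
  have hDcard : D.card = E.card - A.card - B.card := by
    rw [hD, Finset.card_sdiff_of_subset (Finset.union_subset hA hB), Finset.card_union_of_disjoint hAB]
    omega
  have hABE : A.card + B.card ≤ E.card := by
    rw [← Finset.card_union_of_disjoint hAB]
    exact Finset.card_le_card (Finset.union_subset hA hB)
  have key : ∑ F ∈ (E.powerset.filter fun F => A ⊆ F ∧ ∀ e ∈ B, e ∉ F),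
      p ^ F.card * q ^ (E.card - F.card)
      = ∑ t ∈ D.powerset, p ^ (t ∪ A).card * q ^ (E.card - (t ∪ A).card) := by
    refine Finset.sum_nbij' (fun F => F \ A) (fun t => t ∪ A) ?_ ?_ ?_ ?_ ?_
    · intro F hF
      simp only [Finset.mem_filter, Finset.mem_powerset] at hF
      obtain ⟨hFE, hAF, hBF⟩ := hF
      rw [Finset.mem_powerset, hD]
      intro x hx
      rw [Finset.mem_sdiff] at hx ⊢
      refine ⟨hFE hx.1, ?_⟩
      rw [Finset.mem_union]
      rintro (h | h)
      · exact hx.2 h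
      · exact hBF x h hx.1
    · intro t ht
      rw [Finset.mem_powerset] at ht
      simp only [Finset.mem_filter, Finset.mem_powerset]
      refine ⟨Finset.union_subset (ht.trans Finset.sdiff_subset) hA, Finset.subset_union_right, ?_⟩
      intro e heB heF
      rw [Finset.mem_union] at heF
      rcases heF with h | h
      · have := ht h
        rw [hD, Finset.mem_sdiff, Finset.mem_union] at this
        exact this.2 (Or.inr heB)
      · exact hAB.forall_ne_finset h heB rfl
    · intro F hF
      simp only [Finset.mem_filter, Finset.mem_powerset] at hF
      exact Finset.sdiff_union_of_subset hF.2.1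
    · intro t ht
      rw [Finset.mem_powerset] at ht
      show (t ∪ A) \ A = t
      rw [Finset.union_sdiff_right]
      refine Finset.sdiff_eq_self_of_disjoint ?_
      exact Finset.disjoint_left.mpr fun x hx hxA => by
        have := ht hx
        rw [hD, Finset.mem_sdiff, Finset.mem_union] at this
        exact this.2 (Or.inl hxA)
    · intro F hF
      simp only [Finset.mem_filter, Finset.mem_powerset] at hF
      rw [Finset.sdiff_union_of_subset hF.2.1]
  rw [key]
  have : ∀ t ∈ D.powerset, p ^ (t ∪ A).card * q ^ (E.card - (t ∪ A).card)
      = (p ^ A.card * q ^ B.card) * (p ^ t.card * q ^ (D.card - t.card)) := by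
    intro t ht
    rw [Finset.mem_powerset] at ht
    have hdisj : Disjoint t A := Finset.disjoint_left.mpr fun x hx hxA => by
      have := ht hx
      rw [hD, Finset.mem_sdiff, Finset.mem_union] at this
      exact this.2 (Or.inl hxA)
    have htD : t.card ≤ D.card := Finset.card_le_card ht
    rw [Finset.card_union_of_disjoint hdisj]
    have : E.card - (t.card + A.card) = B.card + (D.card - t.card) := by omega
    rw [this, pow_add, pow_add]
    ring
  rw [Finset.sum_congr rfl this, ← Finset.mul_sum, sum_powerset_pow, hpq, one_pow, mul_one]

lemma walk_support_getElem {V : Type*} {G : SimpleGraph V} {u v : V} (w : G.Walk u v) :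
    ∀ (i : ℕ) (hi : i < w.support.length), w.support[i] = w.getVert i := by
  induction w with
  | nil =>
    intro i hi
    simp only [SimpleGraph.Walk.support_nil, List.length_singleton] at hi
    interval_cases i
    simp [SimpleGraph.Walk.getVert_zero]
  | cons h p ih =>
    intro i hi
    cases i with
    | zero => simp [SimpleGraph.Walk.support_cons, SimpleGraph.Walk.getVert_zero]
    | succ i =>
      simp only [SimpleGraph.Walk.support_cons, List.getElem_cons_succ,
        SimpleGraph.Walk.getVert_cons_succ]
      apply ih

lemma two_le_of_cycle {V : Type*} [Fintype V] [DecidableEq V]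
    (G : SimpleGraph V) [DecidableRel G.Adj] (m : ℕ) (hreg : G.IsRegularOfDegree m)
    {a : V} (w : G.Walk a a) (hw : w.IsCycle) : 2 ≤ m := by
  have hn : 3 ≤ w.length := hw.three_le_length
  have hlen : w.support.length = w.length + 1 := SimpleGraph.Walk.length_support w
  have hab : G.Adj a (w.getVert 1) := by
    have := w.adj_getVert_succ (i := 0) (by omega)
    simpa [SimpleGraph.Walk.getVert_zero] using this
  have hca : G.Adj (w.getVert (w.length - 1)) a := by
    have := w.adj_getVert_succ (i := w.length - 1) (by omega)
    have h2 : w.length - 1 + 1 = w.length := by omega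
    rw [h2, SimpleGraph.Walk.getVert_length] at this
    exact this
  have hbc : w.getVert 1 ≠ w.getVert (w.length - 1) := by
    intro hEq
    have hnd := hw.support_nodup
    have h0 : w.support.tail[0]'(by simp [hlen]; omega) =
        w.support.tail[w.length - 2]'(by simp [hlen]; omega) := by
      rw [List.getElem_tail, List.getElem_tail, walk_support_getElem, walk_support_getElem]
      · have : w.length - 2 + 1 = w.length - 1 := by omega
        rw [this, hEq]
    have := hnd.getElem_inj_iff.mp h0
    omega
  have hsub : ({w.getVert 1, w.getVert (w.length - 1)} : Finset V) ⊆ G.neighborFinset a := by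
    intro x hx
    simp only [Finset.mem_insert, Finset.mem_singleton] at hx
    rw [SimpleGraph.mem_neighborFinset]
    rcases hx with rfl | rfl
    · exact hab
    · exact hca.symm
  calc 2 = ({w.getVert 1, w.getVert (w.length - 1)} : Finset V).card :=
        (Finset.card_pair hbc).symm
    _ ≤ (G.neighborFinset a).card := Finset.card_le_card hsub
    _ = m := hreg a

set_option maxHeartbeats 1000000 in
theorem probability_connected_component_in_percolation
    {V : Type*} [Fintype V] [DecidableEq V]
    (G : SimpleGraph V) [DecidableRel G.Adj]
    (m δ k : ℕ) (hreg : G.IsRegularOfDegree m)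
    (hgirth : (δ + 2 : ℕ∞) ≤ G.girth)
    (p : ℝ) (hp : p ∈ Set.Icc (0 : ℝ) 1)
    (W : Finset V) (T : Finset (Sym2 V)) (C : G.Subgraph)
    (hverts : C.verts = ↑W) (hedges : C.edgeSet = ↑T)
    (hconn : C.Connected) (hTcard : T.card = k) (hkδ : k ≤ δ)
    (hk0 : k = 0 → W.card = 1)
    (hk1 : 1 ≤ k → ∀ v ∈ W, ∃ e ∈ T, v ∈ e) :
    ∑ F ∈ G.edgeFinset.powerset,
      (if T ⊆ F ∧ ∀ e ∈ G.edgeFinset, (∃ v ∈ W, v ∈ e) → e ∉ T → e ∉ F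
        then p ^ F.card * (1 - p) ^ (G.edgeFinset.card - F.card) else 0)
      = (1 - p) ^ m * (p * (1 - p) ^ (m - 2)) ^ k := by
  classical
  -- T consists of edges of G
  have hTE : T ⊆ G.edgeFinset := by
    intro e he
    rw [SimpleGraph.mem_edgeFinset]
    exact C.edgeSet_subset (by rw [hedges]; exact_mod_cast he)
  -- endpoints of edges of T lie in W
  have hTW : ∀ e ∈ T, ∀ v ∈ e, v ∈ W := by
    intro e
    induction e using Sym2.ind with
    | _ a b =>
      intro he v hv
      have heC : s(a, b) ∈ C.edgeSet := by rw [hedges]; exact_mod_cast he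
      rw [SimpleGraph.Subgraph.mem_edgeSet] at heC
      have ha := heC.fst_mem
      have hb := heC.snd_mem
      rw [hverts] at ha hb
      rw [Sym2.mem_iff] at hv
      rcases hv with rfl | rfl
      · exact_mod_cast ha
      · exact_mod_cast hb
  -- girth facts
  have hegirth : ((δ : ℕ∞) + 2) ≤ G.egirth :=
    le_trans hgirth (ENat.coe_toNat_le_self _)
  have hcyc_len : ∀ (a : V) (w : G.Walk a a), w.IsCycle → δ + 2 ≤ w.length := by
    intro a w hw
    have h := (SimpleGraph.le_egirth.mp hegirth) a w hw
    exact_mod_cast h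
  have hCconn : C.coe.Connected := SimpleGraph.Subgraph.connected_iff'.mp hconn
  -- edges of mapped walks lie in T
  have hwalk_edges : ∀ (x y : C.verts) (w : C.coe.Walk x y) (e : Sym2 V),
      e ∈ (w.map C.hom).edges → e ∈ T := by
    intro x y w e he
    rw [SimpleGraph.Walk.edges_map, List.mem_map] at he
    obtain ⟨e', he', rfl⟩ := he
    have h1 : e' ∈ C.coe.edgeSet := w.edges_subset_edgeSet he'
    rw [SimpleGraph.Subgraph.edgeSet_coe] at h1
    rw [Set.mem_preimage, hedges] at h1
    exact_mod_cast h1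
  -- internal edges of G on W are exactly T
  have hinternal : ∀ e ∈ G.edgeFinset, (∀ v ∈ e, v ∈ W) → e ∈ T := by
    intro e
    induction e using Sym2.ind with
    | _ u v =>
      intro he hvw
      by_contra heT
      have hadj : G.Adj u v := by
        rwa [SimpleGraph.mem_edgeFinset, SimpleGraph.mem_edgeSet] at he
      have hu : u ∈ C.verts := by
        rw [hverts]; exact_mod_cast hvw u (Sym2.mem_mk_left u v)
      have hv : v ∈ C.verts := by
        rw [hverts]; exact_mod_cast hvw v (Sym2.mem_mk_right u v)
      obtain ⟨w0⟩ := hCconn.preconnected ⟨v, hv⟩ ⟨u, hu⟩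
      let pw : G.Walk v u := ((w0.map C.hom).bypass).copy rfl rfl
      have hpath : pw.IsPath := by
        simp only [pw, SimpleGraph.Walk.isPath_copy]
        exact (w0.map C.hom).bypass_isPath
      have hpe : ∀ e ∈ pw.edges, e ∈ T := by
        intro e he
        simp only [pw, SimpleGraph.Walk.edges_copy] at he
        exact hwalk_edges _ _ w0 e (SimpleGraph.Walk.edges_bypass_subset _ he)
      have hnm : s(u, v) ∉ pw.edges := fun hmem => heT (hpe _ hmem)
      have hcyc : (SimpleGraph.Walk.cons hadj pw).IsCycle :=
        (SimpleGraph.Walk.cons_isCycle_iff _ hadj).mpr ⟨hpath, hnm⟩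
      have hlen := hcyc_len u _ hcyc
      rw [SimpleGraph.Walk.length_cons] at hlen
      have hnd : pw.edges.Nodup := hpath.isTrail.edges_nodup
      have hle : pw.edges.length ≤ k := by
        rw [← hTcard, ← List.toFinset_card_of_nodup hnd]
        exact Finset.card_le_card (fun e he => hpe e (List.mem_toFinset.mp he))
      rw [SimpleGraph.Walk.length_edges] at hle
      omega
  -- m ≥ 2
  have hnacy : ¬ G.IsAcyclic := by
    intro h
    rw [← SimpleGraph.girth_eq_zero] at h
    rw [h] at hgirth
    simp at hgirth
  obtain ⟨a, w, hw, -⟩ := SimpleGraph.exists_girth_eq_length.mpr hnacy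
  have hm2 : 2 ≤ m := two_le_of_cycle G m hreg w hw
  -- C.coe is acyclic
  have hacy : C.coe.IsAcyclic := by
    intro x w hw
    have hw' : (w.map C.hom).IsCycle := hw.map SimpleGraph.Subgraph.hom_injective
    have hlen : δ + 2 ≤ (w.map C.hom).length := hcyc_len _ (w.map C.hom) hw'
    have hnd : (w.map C.hom).edges.Nodup := hw'.isCircuit.isTrail.edges_nodup
    have hle : (w.map C.hom).edges.length ≤ k := by
      rw [← hTcard, ← List.toFinset_card_of_nodup hnd]
      exact Finset.card_le_card (fun e he =>
        hwalk_edges _ _ w e (List.mem_toFinset.mp he))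
    rw [SimpleGraph.Walk.length_edges] at hle
    omega
  have htree : C.coe.IsTree := ⟨hCconn, hacy⟩
  haveI : Fintype ↥C.verts := (Set.toFinite C.verts).fintype
  haveI : Fintype C.coe.edgeSet := (Set.toFinite _).fintype
  -- |W| = k + 1
  have hWk : W.card = k + 1 := by
    have hcard := htree.card_edgeFinset
    have h1 : Fintype.card ↥C.verts = W.card := by
      rw [← Set.toFinset_card]
      simp [hverts]
    have h2 : C.coe.edgeFinset.card = k := by
      have h3 : C.coe.edgeSet.ncard = C.edgeSet.ncard := by
        rw [← SimpleGraph.Subgraph.image_coe_edgeSet_coe C]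
        exact (Set.ncard_image_of_injective _
          (Sym2.map.injective Subtype.val_injective)).symm
      rw [hedges, Set.ncard_coe_finset, hTcard] at h3
      rw [SimpleGraph.edgeFinset, ← Set.ncard_eq_toFinset_card']
      exact h3
    rw [h1, h2] at hcard
    omega
  -- the set of edges touching W
  set N := G.edgeFinset.filter (fun e => ∃ v ∈ W, v ∈ e) with hN
  have hTN : T ⊆ N := by
    intro e he
    rw [hN, Finset.mem_filter]
    refine ⟨hTE he, ?_⟩
    induction e using Sym2.ind with
    | _ a b => exact ⟨a, hTW _ he a (Sym2.mem_mk_left a b), Sym2.mem_mk_left a b⟩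
  -- handshake count
  have hhs : m * (k + 1) = N.card + k := by
    have h1 : ∑ v ∈ W, (G.incidenceFinset v).card = m * (k + 1) := by
      have hconst : ∀ v ∈ W, (G.incidenceFinset v).card = m := by
        intro v _
        rw [SimpleGraph.card_incidenceFinset_eq_degree]
        exact hreg v
      rw [Finset.sum_congr rfl hconst, Finset.sum_const, hWk, smul_eq_mul, mul_comm]
    have h2 : ∑ v ∈ W, (G.incidenceFinset v).card
        = ∑ e ∈ G.edgeFinset, (W.filter (fun v => v ∈ e)).card := by
      rw [Finset.sum_congr rfl (fun v (_ : v ∈ W) =>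
        congrArg Finset.card (SimpleGraph.incidenceFinset_eq_filter G v))]
      simp only [Finset.card_filter]
      rw [Finset.sum_comm]
    have h3 : ∀ e ∈ G.edgeFinset, (W.filter (fun v => v ∈ e)).card
        = (if e ∈ N then 1 else 0) + (if e ∈ T then 1 else 0) := by
      intro e
      induction e using Sym2.ind with
      | _ a b =>
        intro he
        have hne : a ≠ b := ((SimpleGraph.mem_edgeSet G).mp
          (SimpleGraph.mem_edgeFinset.mp he)).ne
        have hfil : W.filter (fun v => v ∈ s(a, b))
            = (W.filter (fun v => v = a)) ∪ (W.filter (fun v => v = b)) := by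
          rw [← Finset.filter_or]
          apply Finset.filter_congr
          intro x _
          simp [Sym2.mem_iff]
        by_cases ha : a ∈ W <;> by_cases hb : b ∈ W
        · have heT : s(a, b) ∈ T := hinternal _ he (by
            intro v hv
            rw [Sym2.mem_iff] at hv
            rcases hv with rfl | rfl
            exacts [ha, hb])
          have heN : s(a, b) ∈ N := hTN heT
          rw [if_pos heN, if_pos heT, hfil, Finset.filter_eq', Finset.filter_eq',
            if_pos ha, if_pos hb]
          rw [Finset.card_union_of_disjoint (by simp [hne.symm, hne])]
          simp
        · have heT : s(a, b) ∉ T := fun h => hb (hTW _ h b (Sym2.mem_mk_right a b))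
          have heN : s(a, b) ∈ N := by
            rw [hN, Finset.mem_filter]
            exact ⟨he, a, ha, Sym2.mem_mk_left a b⟩
          rw [if_pos heN, if_neg heT, hfil, Finset.filter_eq', Finset.filter_eq',
            if_pos ha, if_neg hb]
          simp
        · have heT : s(a, b) ∉ T := fun h => ha (hTW _ h a (Sym2.mem_mk_left a b))
          have heN : s(a, b) ∈ N := by
            rw [hN, Finset.mem_filter]
            exact ⟨he, b, hb, Sym2.mem_mk_right a b⟩
          rw [if_pos heN, if_neg heT, hfil, Finset.filter_eq', Finset.filter_eq',
            if_neg ha, if_pos hb]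
          simp
        · have heT : s(a, b) ∉ T := fun h => ha (hTW _ h a (Sym2.mem_mk_left a b))
          have heN : s(a, b) ∉ N := by
            rw [hN, Finset.mem_filter]
            rintro ⟨-, v, hvW, hve⟩
            rw [Sym2.mem_iff] at hve
            rcases hve with rfl | rfl
            exacts [ha hvW, hb hvW]
          rw [if_neg heN, if_neg heT, hfil, Finset.filter_eq', Finset.filter_eq',
            if_neg ha, if_neg hb]
          simp
    calc m * (k + 1)
        = ∑ e ∈ G.edgeFinset, ((if e ∈ N then 1 else 0) + (if e ∈ T then 1 else 0)) := by
          rw [← h1, h2]; exact Finset.sum_congr rfl h3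
      _ = N.card + T.card := by
          rw [Finset.sum_add_distrib]
          congr 1
          · rw [Finset.sum_ite_mem, Finset.inter_eq_right.mpr (Finset.filter_subset _ _),
              Finset.sum_const, smul_eq_mul, mul_one]
          · rw [Finset.sum_ite_mem, Finset.inter_eq_right.mpr hTE,
              Finset.sum_const, smul_eq_mul, mul_one]
      _ = N.card + k := by rw [hTcard]
  -- the boundary edge set
  set B := G.edgeFinset.filter (fun e => (∃ v ∈ W, v ∈ e) ∧ e ∉ T) with hB
  have hBeq : B = N \ T := by
    ext e
    rw [hB, hN]
    simp only [Finset.mem_sdiff, Finset.mem_filter]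
    constructor
    · rintro ⟨h1, h2, h3⟩; exact ⟨⟨h1, h2⟩, h3⟩
    · rintro ⟨⟨h1, h2⟩, h3⟩; exact ⟨h1, h2, h3⟩
  have hBcard : B.card = m + k * (m - 2) := by
    rw [hBeq, Finset.card_sdiff_of_subset hTN, hTcard]
    obtain ⟨a, rfl⟩ : ∃ a, m = a + 2 := ⟨m - 2, by omega⟩
    have hexp : (a + 2) * (k + 1) = a * k + (a + 2 * k + 2) := by ring
    have hexp2 : a + 2 + k * (a + 2 - 2) = a * k + (a + 2) := by
      simp only [Nat.add_sub_cancel]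
      ring
    rw [hexp2]
    rw [hexp] at hhs
    omega
  -- conclude
  have hcond : ∀ F ∈ G.edgeFinset.powerset,
      (if T ⊆ F ∧ ∀ e ∈ G.edgeFinset, (∃ v ∈ W, v ∈ e) → e ∉ T → e ∉ F
        then p ^ F.card * (1 - p) ^ (G.edgeFinset.card - F.card) else 0)
      = (if T ⊆ F ∧ ∀ e ∈ B, e ∉ F
        then p ^ F.card * (1 - p) ^ (G.edgeFinset.card - F.card) else 0) := by
    intro F _
    apply if_congr _ rfl rfl
    constructor
    · rintro ⟨h1, h2⟩
      refine ⟨h1, fun e he => ?_⟩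
      rw [hB, Finset.mem_filter] at he
      exact h2 e he.1 he.2.1 he.2.2
    · rintro ⟨h1, h2⟩
      refine ⟨h1, fun e heE hv ht => h2 e ?_⟩
      rw [hB, Finset.mem_filter]
      exact ⟨heE, hv, ht⟩
  rw [Finset.sum_congr rfl hcond]
  have hdisj : Disjoint T B := by
    rw [Finset.disjoint_left]
    intro e heT heB
    rw [hB, Finset.mem_filter] at heB
    exact heB.2.2 heT
  have hps := perc_sum G.edgeFinset T B hTE (Finset.filter_subset _ _) hdisj
    (p := p) (q := 1 - p) (by ring)
  have hstep : (∑ F ∈ G.edgeFinset.powerset,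
      if T ⊆ F ∧ ∀ e ∈ B, e ∉ F
        then p ^ F.card * (1 - p) ^ (G.edgeFinset.card - F.card) else 0)
      = p ^ T.card * (1 - p) ^ B.card := by
    convert hps using 2
    split_ifs with h <;> rfl
  rw [hstep, hTcard, hBcard, pow_add, pow_mul, mul_pow]
  ring
end

section
/- Let m ≥ 3 and let G be a finite simple m-regular graph with vertex set V whose girth is at least δ+2. Then for every k with 1 ≤ k ≤ δ, the number of edge subsets T ⊆ E(G) with |T| = k such that the subgraph formed by T and its endpoints is connected is at least (|V|/(k+1))·a_k, where a_k = (m/k)·C((m−1)(k+1), k−1). -/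
set_option linter.unusedSectionVars false

namespace CCESLB

def fc (p : ℕ) : ℕ → ℕ → ℕ
  | _, 0 => 1
  | 0, _+1 => 0
  | d+1, j+1 => fc p d (j+1) + fc p (d+p) j
termination_by d j => (j, d)

@[simp] lemma fc_zero (p d : ℕ) : fc p d 0 = 1 := by
  cases d <;> rw [fc]

@[simp] lemma fc_zero_succ (p j : ℕ) : fc p 0 (j+1) = 0 := by rw [fc]

lemma fc_succ (p d j : ℕ) : fc p (d+1) (j+1) = fc p d (j+1) + fc p (d+p) j := by
  rw [fc]

lemma fc_id (p : ℕ) (hp : 1 ≤ p) : ∀ j d, (d + p*j) * fc p d j = d * Nat.choose (d + p*j) j := by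
  intro j
  induction j with
  | zero => intro d; simp
  | succ j ih =>
    intro d
    induction d with
    | zero => simp
    | succ d ihd =>
      have hM : d + p*(j+1) = d + p + p*j := by ring
      set M := d + p + p*j with hMdef
      have h1 : M * fc p d (j+1) = d * Nat.choose M (j+1) := by
        rw [← hM]; exact ihd
      have h2 : M * fc p (d+p) j = (d+p) * Nat.choose M j := ih (d+p)
      have hj : j ≤ M := by nlinarith
      have h3 : Nat.choose M (j+1) * (j+1) = Nat.choose M j * (M - j) :=
        Nat.choose_succ_right_eq M j
      have pascal : Nat.choose (M+1) (j+1) = Nat.choose M j + Nat.choose M (j+1) :=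
        Nat.choose_succ_succ M j
      have hMj : M - j + j = M := Nat.sub_add_cancel hj
      have key : (M+1) * (d * Nat.choose M (j+1) + (d+p) * Nat.choose M j)
          = M * ((d+1) * Nat.choose (M+1) (j+1)) := by
        zify at h3 pascal ⊢
        have hMjz : ((M - j : ℕ) : ℤ) = (M : ℤ) - j := by
          omega
        rw [hMjz] at h3
        have hMz : (M : ℤ) = d + p + p*j := by exact_mod_cast hMdef
        linear_combination (-(M:ℤ)*((d:ℤ)+1)) * pascal - (p:ℤ) * h3
          - ((Nat.choose M (j+1) : ℤ) + (Nat.choose M j : ℤ)) * hMz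
      have hgoal : (d+1) + p*(j+1) = M + 1 := by omega
      rw [hgoal, fc_succ]
      have hM0 : 0 < M := by omega
      apply Nat.eq_of_mul_eq_mul_left hM0
      calc M * ((M+1) * (fc p d (j+1) + fc p (d+p) j))
          = (M+1) * (M * fc p d (j+1) + M * fc p (d+p) j) := by ring
        _ = (M+1) * (d * Nat.choose M (j+1) + (d+p) * Nat.choose M j) := by rw [h1, h2]
        _ = M * ((d+1) * Nat.choose (M+1) (j+1)) := key



variable {V : Type*} [Fintype V] [DecidableEq V] (G : SimpleGraph V) [DecidableRel G.Adj]

def Wset (v : V) (S : Finset (Sym2 V)) : Set V := {x | x = v ∨ ∃ e ∈ S, x ∈ e}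

lemma mem_Wset_of_edge {v : V} {S : Finset (Sym2 V)} {e : Sym2 V} {x : V}
    (he : e ∈ S) (hx : x ∈ e) : x ∈ Wset v S := Or.inr ⟨e, he, hx⟩

def Csub (v : V) (S : Finset (Sym2 V)) : G.Subgraph where
  verts := Wset v S
  Adj x y := s(x,y) ∈ S ∧ G.Adj x y
  adj_sub h := h.2
  edge_vert := by
    rintro x y ⟨h1, h2⟩
    exact Or.inr ⟨s(x,y), h1, Sym2.mem_mk_left x y⟩
  symm := by
    constructor
    rintro x y ⟨h1, h2⟩
    exact ⟨by rwa [Sym2.eq_swap], h2.symm⟩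

lemma csub_verts (v : V) (S : Finset (Sym2 V)) : (Csub G v S).verts = Wset v S := rfl

lemma csub_adj {v : V} {S : Finset (Sym2 V)} {x y : V} :
    (Csub G v S).Adj x y ↔ s(x,y) ∈ S ∧ G.Adj x y := Iff.rfl

lemma girth_le_of_cycle {a : V} {w : G.Walk a a} (hw : w.IsCycle) : G.girth ≤ w.length := by
  have h : G.egirth ≤ w.length :=
    iInf_le_of_le a (iInf_le_of_le w (iInf_le _ hw))
  have := ENat.toNat_le_toNat h (by simp)
  simpa [SimpleGraph.girth] using this

/-- From a connected `Csub`, extract a path in `G` between two vertices of `Wset`,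
with edges in `S`, support in `Wset`, and length at most `S.card`. -/
lemma exists_path (v : V) (S : Finset (Sym2 V)) (hconn : (Csub G v S).Connected)
    {x y : V} (hx : x ∈ Wset v S) (hy : y ∈ Wset v S) :
    ∃ P : G.Walk x y, P.IsPath ∧ (∀ e ∈ P.edges, e ∈ S) ∧ (∀ z ∈ P.support, z ∈ Wset v S)
      ∧ P.length ≤ S.card := by
  obtain ⟨w⟩ := hconn.preconnected ⟨x, hx⟩ ⟨y, hy⟩
  have hedges : ∀ {u u' : (Csub G v S).verts} (q : (Csub G v S).coe.Walk u u') (e : Sym2 V),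
      e ∈ (q.map (Csub G v S).hom).edges → e ∈ S := by
    intro u u' q
    induction q with
    | nil => simp
    | cons h q ih =>
      intro e he
      rw [SimpleGraph.Walk.map_cons, SimpleGraph.Walk.edges_cons] at he
      rcases List.mem_cons.mp he with h' | h'
      · subst h'
        exact ((SimpleGraph.Subgraph.coe_adj _ _ _).mp h).1
      · exact ih _ h'
  obtain ⟨pw, hpw⟩ := w.toPath
  refine ⟨pw.map (Csub G v S).hom, ?_, fun e he => hedges _ _ he, ?_, ?_⟩
  · exact SimpleGraph.Walk.map_isPath_of_injective Subtype.val_injective hpw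
  · intro z hz
    replace hz := (congrArg (z ∈ ·) (SimpleGraph.Walk.support_map (Csub G v S).hom pw)).mp hz
    obtain ⟨⟨z', hz'⟩, _, rfl⟩ := List.mem_map.mp hz
    exact hz'
  · have hnodup : (pw.map (Csub G v S).hom).edges.Nodup :=
      (SimpleGraph.Walk.map_isPath_of_injective Subtype.val_injective hpw).isTrail.edges_nodup
    have hsub : (pw.map (Csub G v S).hom).edges.toFinset ⊆ S := by
      intro e he
      exact hedges _ _ (List.mem_toFinset.mp he)
    calc (pw.map (Csub G v S).hom).length
        = (pw.map (Csub G v S).hom).edges.length := (SimpleGraph.Walk.length_edges _).symm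
      _ = (pw.map (Csub G v S).hom).edges.toFinset.card := (List.toFinset_card_of_nodup hnodup).symm
      _ ≤ S.card := Finset.card_le_card hsub

/-- No two distinct `Wset` vertices can both be adjacent to a common outside vertex
if the girth is large. -/
lemma cyc2 (v : V) {S : Finset (Sym2 V)} (hconn : (Csub G v S).Connected)
    {x y b : V} (hx : x ∈ Wset v S) (hy : y ∈ Wset v S) (hxy : x ≠ y)
    (hb : b ∉ Wset v S) (h1 : G.Adj x b) (h2 : G.Adj y b)
    (hgir : S.card + 2 < G.girth) : False := by
  obtain ⟨P, hP, hPe, hPs, hPl⟩ := exists_path G v S hconn hy hx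
  have hbP : b ∉ P.support := fun h => hb (hPs b h)
  have hw1 : (SimpleGraph.Walk.cons h2.symm P).IsPath :=
    (SimpleGraph.Walk.cons_isPath_iff _ _).mpr ⟨hP, hbP⟩
  have hne : s(x, b) ∉ (SimpleGraph.Walk.cons h2.symm P).edges := by
    rw [SimpleGraph.Walk.edges_cons]
    intro h
    rcases List.mem_cons.mp h with h' | h'
    · rw [Sym2.eq_iff] at h'
      rcases h' with ⟨rfl, rfl⟩ | ⟨rfl, -⟩
      · exact hb hx
      · exact hxy rfl
    · exact hb (mem_Wset_of_edge (hPe _ h') (Sym2.mem_mk_right _ _))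
  have hcyc : (SimpleGraph.Walk.cons h1 (SimpleGraph.Walk.cons h2.symm P)).IsCycle :=
    SimpleGraph.Path.cons_isCycle ⟨_, hw1⟩ h1 hne
  have := girth_le_of_cycle G hcyc
  simp only [SimpleGraph.Walk.length_cons] at this
  omega

/-- No "chain" x–c–b–a with a,x inside and b,c outside, given large girth. -/
lemma cyc3 (v : V) {S : Finset (Sym2 V)} (hconn : (Csub G v S).Connected)
    {x a b c : V} (hx : x ∈ Wset v S) (ha : a ∈ Wset v S)
    (hb : b ∉ Wset v S) (hc : c ∉ Wset v S)
    (h1 : G.Adj a b) (h2 : G.Adj b c) (h3 : G.Adj x c)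
    (hgir : S.card + 3 < G.girth) : False := by
  obtain ⟨P, hP, hPe, hPs, hPl⟩ := exists_path G v S hconn ha hx
  have hbP : b ∉ P.support := fun h => hb (hPs b h)
  have hw1 : (SimpleGraph.Walk.cons h1.symm P).IsPath :=
    (SimpleGraph.Walk.cons_isPath_iff _ _).mpr ⟨hP, hbP⟩
  have hcP : c ∉ (SimpleGraph.Walk.cons h1.symm P).support := by
    rw [SimpleGraph.Walk.support_cons]
    intro h
    rcases List.mem_cons.mp h with h' | h'
    · exact G.irrefl (h' ▸ h2)
    · exact hc (hPs c h')
  have hw2 : (SimpleGraph.Walk.cons h2.symm (SimpleGraph.Walk.cons h1.symm P)).IsPath :=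
    (SimpleGraph.Walk.cons_isPath_iff _ _).mpr ⟨hw1, hcP⟩
  have hne : s(x, c) ∉ (SimpleGraph.Walk.cons h2.symm (SimpleGraph.Walk.cons h1.symm P)).edges := by
    simp only [SimpleGraph.Walk.edges_cons]
    intro h
    rcases List.mem_cons.mp h with h' | h'
    · rw [Sym2.eq_iff] at h'
      rcases h' with ⟨rfl, rfl⟩ | ⟨rfl, -⟩
      · exact G.irrefl h2
      · exact hb hx
    · rcases List.mem_cons.mp h' with h'' | h''
      · rw [Sym2.eq_iff] at h''
        rcases h'' with ⟨rfl, rfl⟩ | ⟨-, rfl⟩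
        · exact hc ha
        · exact G.irrefl h2
      · exact hc (mem_Wset_of_edge (hPe _ h'') (Sym2.mem_mk_right _ _))
  have hcyc : (SimpleGraph.Walk.cons h3
      (SimpleGraph.Walk.cons h2.symm (SimpleGraph.Walk.cons h1.symm P))).IsCycle :=
    SimpleGraph.Path.cons_isCycle ⟨_, hw2⟩ h3 hne
  have := girth_le_of_cycle G hcyc
  simp only [SimpleGraph.Walk.length_cons] at this
  omega

lemma mem_Wset_insert {v : V} {S : Finset (Sym2 V)} {e : Sym2 V} {x : V} :
    x ∈ Wset v (insert e S) ↔ x ∈ Wset v S ∨ x ∈ e := by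
  unfold Wset
  simp only [Set.mem_setOf_eq, Finset.mem_insert]
  constructor
  · rintro (rfl | ⟨e', (rfl | he'), hx⟩)
    · exact Or.inl (Or.inl rfl)
    · exact Or.inr hx
    · exact Or.inl (Or.inr ⟨e', he', hx⟩)
  · rintro ((rfl | ⟨e', he', hx⟩) | hx)
    · exact Or.inl rfl
    · exact Or.inr ⟨e', Or.inr he', hx⟩
    · exact Or.inr ⟨e, Or.inl rfl, hx⟩

lemma csub_insert (v : V) (S : Finset (Sym2 V)) {a b : V} (hab : G.Adj a b) :
    Csub G v (insert s(a,b) S) = Csub G v S ⊔ G.subgraphOfAdj hab := by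
  ext x y
  · constructor
    · intro hx
      rcases mem_Wset_insert.mp hx with h | h
      · exact Or.inl h
      · right
        rw [Sym2.mem_iff] at h
        simpa using h
    · intro hx
      rcases hx with h | h
      · exact mem_Wset_insert.mpr (Or.inl h)
      · refine mem_Wset_insert.mpr (Or.inr ?_)
        simp only [SimpleGraph.subgraphOfAdj_verts, Set.mem_insert_iff,
          Set.mem_singleton_iff] at h
        rw [Sym2.mem_iff]
        exact h
  · simp only [csub_adj, Finset.mem_insert, SimpleGraph.Subgraph.sup_adj,
      SimpleGraph.subgraphOfAdj_adj]
    constructor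
    · rintro ⟨(h | h), hadj⟩
      · exact Or.inr (h.symm)
      · exact Or.inl ⟨h, hadj⟩
    · rintro (⟨h, hadj⟩ | h)
      · exact ⟨Or.inr h, hadj⟩
      · refine ⟨Or.inl h.symm, ?_⟩
        rw [Sym2.eq_iff] at h
        rcases h with ⟨rfl, rfl⟩ | ⟨rfl, rfl⟩
        · exact hab
        · exact hab.symm

lemma csub_insert_connected {v : V} {S : Finset (Sym2 V)} {a b : V} (hab : G.Adj a b)
    (ha : a ∈ Wset v S) (hconn : (Csub G v S).Connected) :
    (Csub G v (insert s(a,b) S)).Connected := by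
  rw [csub_insert G v S hab]
  exact SimpleGraph.Subgraph.connected_sup hconn.preconnected
    (SimpleGraph.Subgraph.subgraphOfAdj_connected hab).preconnected ⟨a, ha, by simp⟩

lemma csub_empty_connected (v : V) : (Csub G v (∅ : Finset (Sym2 V))).Connected := by
  have h : Csub G v ∅ = G.singletonSubgraph v := by
    ext x y
    · simp [csub_verts, Wset, SimpleGraph.singletonSubgraph]
    · simp [csub_adj, SimpleGraph.singletonSubgraph]
  rw [h]
  exact SimpleGraph.Subgraph.singletonSubgraph_connected

/-- New slots created when vertex `p.2` is added through slot `p`. -/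
def newSlots (p : V × V) : Finset (V × V) :=
  ((G.neighborFinset p.2).erase p.1).image fun c => (p.2, c)

lemma newSlots_card {p : V × V} (m : ℕ) (hreg : G.IsRegularOfDegree m)
    (hadj : G.Adj p.1 p.2) : (newSlots G p).card = m - 1 := by
  rw [newSlots, Finset.card_image_of_injective _ (fun c c' h => (Prod.mk.injEq _ _ _ _).mp h |>.2),
    Finset.card_erase_of_mem (by rw [SimpleGraph.mem_neighborFinset]; exact hadj.symm),
    G.card_neighborFinset_eq_degree, hreg p.2]

lemma mem_newSlots {p q : V × V} :
    q ∈ newSlots G p ↔ q.1 = p.2 ∧ G.Adj p.2 q.2 ∧ q.2 ≠ p.1 := by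
  unfold newSlots
  simp only [Finset.mem_image, Finset.mem_erase, SimpleGraph.mem_neighborFinset]
  constructor
  · rintro ⟨c, ⟨hc1, hc2⟩, rfl⟩
    exact ⟨rfl, hc2, hc1⟩
  · rintro ⟨h1, h2, h3⟩
    exact ⟨q.2, ⟨h3, h2⟩, by rw [← h1]⟩

/-- The recursively constructed set of edge-sets extending `S` by `j` edges
using available slots `F`. -/
noncomputable def TT : ℕ → Finset (Sym2 V) → Finset (V × V) → Finset (Finset (Sym2 V))
  | 0, S, _ => {S}
  | (j+1), S, F =>
    if h : F.Nonempty then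
      TT (j+1) S (F.erase (Classical.choose h)) ∪
        TT j (insert (Sym2.mk.uncurry (Classical.choose h)) S)
          ((F.erase (Classical.choose h)) ∪ newSlots G (Classical.choose h))
    else ∅
termination_by j _ F => (j, F.card)
decreasing_by
  · exact Prod.Lex.right _ (Finset.card_erase_lt_of_mem (Classical.choose_spec h))
  · exact Prod.Lex.left _ _ (Nat.lt_succ_self j)

lemma TT_zero (S : Finset (Sym2 V)) (F : Finset (V × V)) : TT G 0 S F = {S} := by
  rw [TT]

lemma TT_succ (j : ℕ) (S : Finset (Sym2 V)) {F : Finset (V × V)} (h : F.Nonempty) :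
    TT G (j+1) S F =
      TT G (j+1) S (F.erase (Classical.choose h)) ∪
        TT G j (insert (Sym2.mk.uncurry (Classical.choose h)) S)
          ((F.erase (Classical.choose h)) ∪ newSlots G (Classical.choose h)) := by
  rw [TT, dif_pos h]

lemma TT_empty (j : ℕ) (S : Finset (Sym2 V)) :
    TT G (j+1) S ∅ = ∅ := by
  rw [TT, dif_neg (by simp)]

lemma main (v : V) (k m : ℕ) (hg : k + 2 ≤ G.girth) (hreg : G.IsRegularOfDegree m) :
    ∀ j, ∀ F : Finset (V × V), ∀ S : Finset (Sym2 V),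
      S.card + j = k → ↑S ⊆ G.edgeSet → (Csub G v S).Connected →
      (∀ q ∈ F, G.Adj q.1 q.2 ∧ q.1 ∈ Wset v S ∧ q.2 ∉ Wset v S) →
      (1 ≤ j → ∀ q ∈ F, ∀ q' ∈ F, q ≠ q' → q.2 ≠ q'.2) →
      (∀ T ∈ TT G j S F, S ⊆ T ∧ T.card = S.card + j ∧ ↑T ⊆ G.edgeSet ∧
          (Csub G v T).Connected ∧
          ∀ x y : V, s(x,y) ∈ T → s(x,y) ∉ S → x ∈ Wset v S → (x, y) ∈ F) ∧
      fc (m-1) F.card j ≤ (TT G j S F).card := by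
  intro j
  induction j with
  | zero =>
    intro F S hcard hsub hconn hval hinj
    rw [TT_zero]
    constructor
    · intro T hT
      rw [Finset.mem_singleton] at hT
      subst hT
      exact ⟨subset_rfl, by simp, hsub, hconn, fun x y h1 h2 _ => absurd h1 h2⟩
    · simp
  | succ j ih =>
    intro F
    induction F using Finset.strongInduction with
    | _ F ihF =>
    intro S hcard hsub hconn hval hinj
    rcases F.eq_empty_or_nonempty with rfl | hne
    · rw [TT_empty]
      exact ⟨by simp, by simp⟩
    · have hq0 : Classical.choose hne ∈ F := Classical.choose_spec hne
      set q0 : V × V := Classical.choose hne with hq0def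
      obtain ⟨hadj, haW, hbW⟩ := hval q0 hq0
      set a := q0.1
      set b := q0.2
      have hq0eta : ((a, b) : V × V) = q0 := rfl
      have hmk : Sym2.mk.uncurry q0 = s(a, b) := rfl
      set F' := F.erase q0 with hF'def
      set NS := newSlots G q0 with hNSdef
      set S' := insert s(a,b) S with hS'def
      have heS : s(a,b) ∉ S := fun h => hbW (mem_Wset_of_edge h (Sym2.mem_mk_right a b))
      have hS'card : S'.card = S.card + 1 := Finset.card_insert_of_notMem heS
      have hS'sub : ↑S' ⊆ G.edgeSet := by
        rw [hS'def, Finset.coe_insert, Set.insert_subset_iff]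
        exact ⟨hadj, hsub⟩
      have hconn' : (Csub G v S').Connected := csub_insert_connected G hadj haW hconn
      have hW' : ∀ x : V, x ∈ Wset v S' ↔ x ∈ Wset v S ∨ x = a ∨ x = b := by
        intro x
        rw [hS'def, mem_Wset_insert, Sym2.mem_iff]
      have hgir2 : S.card + 2 < G.girth := by omega
      -- validity of slots in F' ∪ NS with respect to S'
      have hvalNS : ∀ q ∈ NS, G.Adj q.1 q.2 ∧ q.1 = b ∧ q.2 ∉ Wset v S ∧ q.2 ≠ a ∧ q.2 ≠ b := by
        intro q hq
        obtain ⟨hq1, hq2, hq3⟩ := (mem_newSlots G).mp hq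
        refine ⟨by rw [hq1]; exact hq2, hq1, ?_, hq3, hq2.ne'⟩
        intro hqW
        exact cyc2 G v hconn haW hqW (fun h => hq3 h.symm) hbW hadj hq2.symm hgir2
      have hval'' : ∀ q ∈ F' ∪ NS, G.Adj q.1 q.2 ∧ q.1 ∈ Wset v S' ∧ q.2 ∉ Wset v S' := by
        intro q hq
        rcases Finset.mem_union.mp hq with hq | hq
        · have hqF := Finset.mem_of_mem_erase hq
          obtain ⟨h1, h2, h3⟩ := hval q hqF
          refine ⟨h1, (hW' _).mpr (Or.inl h2), ?_⟩
          rw [hW']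
          push_neg
          refine ⟨h3, fun h => (h ▸ h3) haW, ?_⟩
          intro h
          exact (hinj (by omega) q hqF q0 hq0 (Finset.ne_of_mem_erase hq) h).elim
        · obtain ⟨h1, h2, h3, h4, h5⟩ := hvalNS q hq
          refine ⟨h1, (hW' _).mpr (Or.inr (Or.inr h2)), ?_⟩
          rw [hW']
          push_neg
          exact ⟨h3, h4, h5⟩
      -- injectivity of targets in F' ∪ NS
      have hinj'' : 1 ≤ j → ∀ q ∈ F' ∪ NS, ∀ q' ∈ F' ∪ NS, q ≠ q' → q.2 ≠ q'.2 := by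
        intro hj
        have hgir3 : S.card + 3 < G.girth := by omega
        have hcross : ∀ q ∈ F', ∀ q' ∈ NS, q.2 ≠ q'.2 := by
          intro q hq q' hq' hEq
          obtain ⟨h1, h2, h3⟩ := hval q (Finset.mem_of_mem_erase hq)
          obtain ⟨h1', h2', h3', h4', h5'⟩ := hvalNS q' hq'
          have hxc : G.Adj q.1 q'.2 := by rw [← hEq]; exact h1
          have hbc : G.Adj b q'.2 := by rw [← h2']; exact h1'
          exact cyc3 G v hconn h2 haW hbW h3' hadj hbc hxc hgir3
        intro q hq q' hq' hne' hEq
        rcases Finset.mem_union.mp hq with h | h <;> rcases Finset.mem_union.mp hq' with h' | h'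
        · exact hinj (by omega) q (Finset.mem_of_mem_erase h) q'
            (Finset.mem_of_mem_erase h') hne' hEq
        · exact hcross q h q' h' hEq
        · exact hcross q' h' q h hEq.symm
        · obtain ⟨e1, -, -⟩ := (mem_newSlots G).mp h
          obtain ⟨e1', -, -⟩ := (mem_newSlots G).mp h'
          exact hne' (Prod.ext (e1.trans e1'.symm) hEq)
      -- apply the two induction hypotheses
      have IH1 := ihF F' (Finset.erase_ssubset hq0) S hcard hsub hconn
        (fun q hq => hval q (Finset.mem_of_mem_erase hq))
        (fun hj q hq q' hq' => hinj hj q (Finset.mem_of_mem_erase hq) q'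
          (Finset.mem_of_mem_erase hq'))
      have IH2 := ih (F' ∪ NS) S' (by omega) hS'sub hconn' hval'' hinj''
      -- disjointness of the two branches
      have hdisj : Disjoint (TT G (j+1) S F') (TT G j S' (F' ∪ NS)) := by
        rw [Finset.disjoint_left]
        intro T hT1 hT2
        have htrace := (IH1.1 T hT1).2.2.2.2
        have hsubT : S' ⊆ T := (IH2.1 T hT2).1
        have hmem : s(a,b) ∈ T := hsubT (Finset.mem_insert_self _ _)
        have : ((a, b) : V × V) ∈ F' := htrace a b hmem heS haW
        rw [hq0eta] at this
        exact Finset.notMem_erase q0 F this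
      have hTTeq := TT_succ G j S hne
      rw [← hq0def, ← hF'def, hmk, ← hS'def, ← hNSdef] at hTTeq
      constructor
      · intro T hT
        rw [hTTeq, Finset.mem_union] at hT
        rcases hT with hT | hT
        · obtain ⟨c1, c2, c3, c4, c5⟩ := IH1.1 T hT
          exact ⟨c1, c2, c3, c4, fun x y e1 e2 e3 =>
            Finset.mem_of_mem_erase (c5 x y e1 e2 e3)⟩
        · obtain ⟨c1, c2, c3, c4, c5⟩ := IH2.1 T hT
          refine ⟨fun e he => c1 (Finset.mem_insert_of_mem he), by omega, c3, c4, ?_⟩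
          intro x y e1 e2 e3
          by_cases hcase : s(x,y) = s(a,b)
          · rw [Sym2.eq_iff] at hcase
            rcases hcase with ⟨rfl, rfl⟩ | ⟨rfl, rfl⟩
            · rw [hq0eta]; exact hq0
            · exact absurd e3 hbW
          · have e2' : s(x,y) ∉ S' := by
              rw [hS'def, Finset.mem_insert]
              push_neg
              exact ⟨hcase, e2⟩
            have := c5 x y e1 e2' ((hW' x).mpr (Or.inl e3))
            rcases Finset.mem_union.mp this with h | h
            · exact Finset.mem_of_mem_erase h
            · obtain ⟨e4, -, -⟩ := (mem_newSlots G).mp h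
              have e4' : x = b := e4
              exact absurd (e4' ▸ e3) hbW
      · rw [hTTeq, Finset.card_union_of_disjoint hdisj]
        have hFcard : F.card = F'.card + 1 := by
          rw [hF'def, Finset.card_erase_of_mem hq0]
          have : 1 ≤ F.card := Finset.card_pos.mpr hne
          omega
        have hNScard : NS.card = m - 1 := newSlots_card G m hreg hadj
        have hdisjF : Disjoint F' NS := by
          rw [Finset.disjoint_left]
          intro q hq hq'
          obtain ⟨-, h2, -⟩ := hval q (Finset.mem_of_mem_erase hq)
          obtain ⟨e1, -, -⟩ := (mem_newSlots G).mp hq'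
          have e1' : q.1 = b := e1
          rw [e1'] at h2
          exact hbW h2
        have hF''card : (F' ∪ NS).card = F'.card + (m - 1) := by
          rw [Finset.card_union_of_disjoint hdisjF, hNScard]
        rw [hFcard, fc_succ]
        have := IH1.2
        have := IH2.2
        rw [hF''card] at this
        omega

lemma mem_Wset_empty {v x : V} : x ∈ Wset v (∅ : Finset (Sym2 V)) ↔ x = v := by
  simp [Wset]

/-- If `T` is nonempty and `Csub G v T` is connected, then `v` is incident to an edge. -/
lemma exists_edge_at_v (v : V) {T : Finset (Sym2 V)} (hne : T.Nonempty)
    (hconn : (Csub G v T).Connected) : ∃ e ∈ T, v ∈ e := by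
  by_contra hcon
  push_neg at hcon
  obtain ⟨e, heT⟩ := hne
  have hx : e.out.1 ∈ e := Sym2.out_fst_mem e
  by_cases hvx : v = e.out.1
  · exact hcon e heT (hvx ▸ hx)
  have hxW : e.out.1 ∈ Wset v T := Or.inr ⟨e, heT, hx⟩
  have hvW : v ∈ Wset v T := Or.inl rfl
  obtain ⟨w⟩ := hconn.preconnected ⟨v, hvW⟩ ⟨e.out.1, hxW⟩
  have key : ∀ (A B : (Csub G v T).verts) (w : (Csub G v T).coe.Walk A B),
      (A : V) = v → (B : V) = e.out.1 → False := by
    intro A B w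
    induction w with
    | nil => intro h1 h2; exact hvx (h1 ▸ h2)
    | @cons A' C' B' hadj p ih =>
      intro h1 h2
      rw [SimpleGraph.Subgraph.coe_adj] at hadj
      have hmem : s((A' : V), (C' : V)) ∈ T := hadj.1
      apply hcon _ hmem
      rw [h1] at hmem ⊢
      exact Sym2.mem_mk_left _ _
  exact key _ _ w rfl rfl

lemma walk_map_edges_mem {H : G.Subgraph} {A B : H.verts} (q : H.coe.Walk A B) :
    ∀ e ∈ (q.map H.hom).edges, e ∈ H.edgeSet := by
  induction q with
  | nil => simp
  | cons h q ih =>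
    intro e he
    rw [SimpleGraph.Walk.map_cons, SimpleGraph.Walk.edges_cons] at he
    rcases List.mem_cons.mp he with h' | h'
    · subst h'
      exact SimpleGraph.Subgraph.mem_edgeSet.mpr ((SimpleGraph.Subgraph.coe_adj _ _ _).mp h)
    · exact ih _ h'

/-- A connected subgraph whose edge set is a `k`-element set has at most `k+1` vertices. -/
lemma verts_card_le (k : ℕ) (hg : k + 2 ≤ G.girth) {T : Finset (Sym2 V)} (hTcard : T.card = k)
    (C : G.Subgraph) (hCe : C.edgeSet = ↑T) (hCc : C.Connected) :
    Nat.card C.verts ≤ k + 1 := by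
  classical
  haveI : Fintype C.verts := Set.Finite.fintype (Set.toFinite _)
  haveI : Fintype C.coe.edgeSet := Set.Finite.fintype (Set.toFinite _)
  have hacyc : C.coe.IsAcyclic := by
    intro u c hc
    have hc' : (c.map C.hom).IsCycle :=
      hc.map (f := C.hom) Subtype.val_injective
    have hlen : G.girth ≤ (c.map C.hom).length := girth_le_of_cycle G hc'
    have hnodup : (c.map C.hom).edges.Nodup := hc'.isTrail.edges_nodup
    have hsub : (c.map C.hom).edges.toFinset ⊆ T := by
      intro e he
      have := walk_map_edges_mem G _ e (List.mem_toFinset.mp he)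
      rwa [hCe] at this
    have hle : (c.map C.hom).length ≤ k :=
      calc (c.map C.hom).length = (c.map C.hom).edges.length :=
            (SimpleGraph.Walk.length_edges _).symm
        _ = (c.map C.hom).edges.toFinset.card := (List.toFinset_card_of_nodup hnodup).symm
        _ ≤ T.card := Finset.card_le_card hsub
        _ = k := hTcard
    omega
  have htree : C.coe.IsTree :=
    ⟨SimpleGraph.Subgraph.connected_iff'.mp hCc, hacyc⟩
  have hcard := htree.card_edgeFinset
  have hedge : C.coe.edgeFinset.card ≤ k := by
    rw [← hTcard]
    apply Finset.card_le_card_of_injOn (Sym2.map (Subtype.val : C.verts → V))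
    · intro e he
      rw [Finset.mem_coe, SimpleGraph.mem_edgeFinset] at he
      induction e with
      | _ u w =>
        have : C.Adj u w := (SimpleGraph.Subgraph.coe_adj _ _ _).mp he
        have : s((u : V), (w : V)) ∈ C.edgeSet := SimpleGraph.Subgraph.mem_edgeSet.mpr this
        rwa [hCe] at this
    · exact fun e _ e' _ h => Sym2.map.injective Subtype.val_injective h
  rw [Nat.card_eq_fintype_card, ← hcard]
  omega

end CCESLB

open CCESLB in
theorem count_connected_edge_subsets_lower_bound
    {V : Type*} [Fintype V] [DecidableEq V]
    (G : SimpleGraph V) [DecidableRel G.Adj]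
    (m δ k : ℕ) (hm : 3 ≤ m) (hreg : G.IsRegularOfDegree m)
    (hgirth : (δ + 2 : ℕ∞) ≤ G.girth)
    (hk1 : 1 ≤ k) (hkδ : k ≤ δ) :
    ((Fintype.card V : ℝ) / (k + 1)) *
        ((m : ℝ) / k * (Nat.choose ((m - 1) * (k + 1)) (k - 1) : ℝ)) ≤
      (Nat.card {T : Finset (Sym2 V) | ↑T ⊆ G.edgeSet ∧ T.card = k ∧
        ∃ C : G.Subgraph, C.verts = {v : V | ∃ e ∈ T, v ∈ e} ∧
          C.edgeSet = ↑T ∧ C.Connected} : ℝ) := by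
  classical
  -- girth bound as a natural number
  have hg : k + 2 ≤ G.girth := by
    have h1 : ((k + 2 : ℕ) : ℕ∞) ≤ (G.girth : ℕ∞) := by
      refine le_trans ?_ hgirth
      push_cast
      exact_mod_cast add_le_add_left (by exact_mod_cast hkδ : (k : ℕ∞) ≤ δ) 2
    exact_mod_cast h1
  set P : Finset (Sym2 V) → Prop := fun T => ↑T ⊆ G.edgeSet ∧ T.card = k ∧
    ∃ C : G.Subgraph, C.verts = {v : V | ∃ e ∈ T, v ∈ e} ∧
      C.edgeSet = ↑T ∧ C.Connected with hPdef
  set Nfin : Finset (Finset (Sym2 V)) := Finset.univ.filter P with hNfin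
  -- counting for each root vertex
  have hvertex : ∀ v : V, fc (m-1) m k ≤
      (Nfin.filter (fun T => ∃ e ∈ T, v ∈ e)).card := by
    intro v
    set Fv : Finset (V × V) := (G.neighborFinset v).image (fun b => (v, b)) with hFv
    have hFvcard : Fv.card = m := by
      rw [hFv, Finset.card_image_of_injective _ (fun b b' h => ((Prod.mk.injEq _ _ _ _).mp h).2),
        G.card_neighborFinset_eq_degree, hreg v]
    have hval0 : ∀ q ∈ Fv, G.Adj q.1 q.2 ∧ q.1 ∈ Wset v ∅ ∧ q.2 ∉ Wset v (∅ : Finset (Sym2 V)) := by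
      intro q hq
      obtain ⟨b, hb, rfl⟩ := Finset.mem_image.mp hq
      rw [SimpleGraph.mem_neighborFinset] at hb
      exact ⟨hb, mem_Wset_empty.mpr rfl, fun h => hb.ne' (mem_Wset_empty.mp h)⟩
    have hinj0 : 1 ≤ k → ∀ q ∈ Fv, ∀ q' ∈ Fv, q ≠ q' → q.2 ≠ q'.2 := by
      intro _ q hq q' hq' hne hEq
      obtain ⟨b, -, rfl⟩ := Finset.mem_image.mp hq
      obtain ⟨b', -, rfl⟩ := Finset.mem_image.mp hq'
      exact hne (by rw [Prod.mk.injEq]; exact ⟨rfl, hEq⟩)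
    have H := main G v k m hg hreg k Fv ∅ (by simp) (by simp)
      (csub_empty_connected G v) hval0 hinj0
    have hsubset : TT G k ∅ Fv ⊆ Nfin.filter (fun T => ∃ e ∈ T, v ∈ e) := by
      intro T hT
      obtain ⟨-, hTcard, hTsub, hTconn, -⟩ := H.1 T hT
      rw [Finset.card_empty, Nat.zero_add] at hTcard
      have hTne : T.Nonempty := Finset.card_pos.mp (by omega)
      have hvinc : ∃ e ∈ T, v ∈ e := exists_edge_at_v G v hTne hTconn
      rw [Finset.mem_filter]
      refine ⟨Finset.mem_filter.mpr ⟨Finset.mem_univ _, hTsub, hTcard, Csub G v T, ?_, ?_, hTconn⟩, hvinc⟩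
      · rw [csub_verts]
        ext x
        constructor
        · rintro (rfl | h)
          · exact hvinc
          · exact h
        · exact fun h => Or.inr h
      · ext e
        induction e with
        | _ x y =>
          rw [SimpleGraph.Subgraph.mem_edgeSet, csub_adj]
          constructor
          · exact fun h => h.1
          · intro h
            exact ⟨h, (G.mem_edgeSet).mp (hTsub h)⟩
    calc fc (m-1) m k = fc (m-1) Fv.card k := by rw [hFvcard]
      _ ≤ (TT G k ∅ Fv).card := H.2
      _ ≤ (Nfin.filter (fun T => ∃ e ∈ T, v ∈ e)).card := Finset.card_le_card hsubset
  -- per-T bound on the number of incident vertices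
  have hTbound : ∀ T ∈ Nfin, (Finset.univ.filter (fun v : V => ∃ e ∈ T, v ∈ e)).card ≤ k + 1 := by
    intro T hT
    obtain ⟨-, hTsub, hTcard, C, hCv, hCe, hCc⟩ := Finset.mem_filter.mp hT
    have := verts_card_le G k hg hTcard C hCe hCc
    have hcongr : Nat.card C.verts =
        (Finset.univ.filter (fun v : V => ∃ e ∈ T, v ∈ e)).card := by
      rw [Nat.card_congr (Equiv.setCongr hCv), Nat.card_eq_fintype_card]
      exact Fintype.card_subtype _
    omega
  -- double counting
  have hswap : ∑ v : V, (Nfin.filter (fun T => ∃ e ∈ T, v ∈ e)).card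
      = ∑ T ∈ Nfin, (Finset.univ.filter (fun v : V => ∃ e ∈ T, v ∈ e)).card := by
    simp_rw [Finset.card_filter]
    exact Finset.sum_comm
  have hmaster : Fintype.card V * fc (m-1) m k ≤ Nfin.card * (k+1) := by
    calc Fintype.card V * fc (m-1) m k
        = ∑ _v : V, fc (m-1) m k := by rw [Finset.sum_const, Finset.card_univ, smul_eq_mul]
      _ ≤ ∑ v : V, (Nfin.filter (fun T => ∃ e ∈ T, v ∈ e)).card := Finset.sum_le_sum
          (fun v _ => hvertex v)
      _ = ∑ T ∈ Nfin, (Finset.univ.filter (fun v : V => ∃ e ∈ T, v ∈ e)).card := hswap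
      _ ≤ ∑ _T ∈ Nfin, (k+1) := Finset.sum_le_sum hTbound
      _ = Nfin.card * (k+1) := by rw [Finset.sum_const, smul_eq_mul]
  -- identify Nat.card with Nfin.card
  have hNat : Nat.card {T : Finset (Sym2 V) | ↑T ⊆ G.edgeSet ∧ T.card = k ∧
        ∃ C : G.Subgraph, C.verts = {v : V | ∃ e ∈ T, v ∈ e} ∧
          C.edgeSet = ↑T ∧ C.Connected} = Nfin.card := by
    rw [Nat.card_eq_fintype_card, hNfin]
    exact Fintype.card_subtype _
  -- the binomial identity
  obtain ⟨m1, rfl⟩ : ∃ m1, m = m1 + 1 := ⟨m - 1, by omega⟩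
  obtain ⟨k1, rfl⟩ : ∃ k1, k = k1 + 1 := ⟨k - 1, by omega⟩
  simp only [Nat.add_sub_cancel] at hmaster hNat ⊢
  set M : ℕ := m1 * (k1 + 2) with hM
  have hMeq : (m1 + 1) + m1 * (k1 + 1) = M + 1 := by rw [hM]; ring
  have key : (M + 1) * fc m1 (m1+1) (k1+1) = (m1+1) * Nat.choose (M+1) (k1+1) := by
    have := fc_id m1 (by omega) (k1+1) (m1+1)
    rwa [hMeq] at this
  have succ_rel : (M + 1) * Nat.choose M k1 = Nat.choose (M+1) (k1+1) * (k1+1) :=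
    Nat.add_one_mul_choose_eq M k1
  -- move to the reals
  have hfc : ((m1:ℝ) + 1) / (k1 + 1) * (Nat.choose (m1 * (k1 + 2)) k1 : ℝ)
      = (fc m1 (m1+1) (k1+1) : ℝ) := by
    have c1 : ((M:ℝ) + 1) * (fc m1 (m1+1) (k1+1) : ℝ)
        = ((m1:ℝ)+1) * (Nat.choose (M+1) (k1+1) : ℝ) := by exact_mod_cast key
    have c2 : ((M:ℝ) + 1) * (Nat.choose M k1 : ℝ)
        = (Nat.choose (M+1) (k1+1) : ℝ) * ((k1:ℝ)+1) := by exact_mod_cast succ_rel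
    have hM1 : ((M:ℝ) + 1) ≠ 0 := by positivity
    have hk1' : ((k1:ℝ) + 1) ≠ 0 := by positivity
    rw [div_mul_eq_mul_div, div_eq_iff hk1']
    apply mul_left_cancel₀ hM1
    rw [← hM]
    nlinarith [c1, c2]
  rw [hNat]
  have hfc' : ((m1:ℝ) + 1) / ((k1:ℝ) + 1) * ((Nat.choose M k1 : ℕ) : ℝ)
      = (fc m1 (m1+1) (k1+1) : ℝ) := hfc
  have hmasterR : (Fintype.card V : ℝ) * (fc m1 (m1+1) (k1+1) : ℝ)
      ≤ (Nfin.card : ℝ) * ((k1:ℝ) + 1 + 1) := by exact_mod_cast hmaster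
  push_cast
  rw [hfc', div_mul_eq_mul_div, div_le_iff₀ (by positivity : (0:ℝ) < (k1:ℝ) + 1 + 1)]
  nlinarith [hmasterR]
end

section
/- (Proposition: code improvement / existence of an improved CSS code.) Let m ≥ 5 with m dividing 2n, and let H_X, H_Z be binary matrices with n columns such that every row of H_X is orthogonal (standard inner product over F₂) to every row of H_Z and rank(H_X) = rank(H_Z) = 2n/m − 1. Set R = 1 − 4/m + 2/n. Suppose ρ ∈ (0, 1/2) and a ∈ ℕ satisfy h(ρ) < a/n < R/2, where h(x) = −x·log₂x − (1−x)·log₂(1−x) is the binary entropy function. Then there exist F₂-subspaces V_X and V_Z of F₂^n with: rowspace(H_X) ⊆ V_X ⊆ Ker(H_Z), rowspace(H_Z) ⊆ V_Z ⊆ Ker(H_X), dim V_X = rank(H_X) + a, dim V_Z = rank(H_Z) + a, and every vector v lying in (V_X^⊥ \ V_Z) ∪ (V_Z^⊥ \ V_X) has Hamming weight at least ρ·n. -/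
open Finset

/-- The binary entropy function. -/
noncomputable def binEntropy (x : ℝ) : ℝ :=
  -x * Real.logb 2 x - (1 - x) * Real.logb 2 (1 - x)

/-- The Hamming weight of a binary vector. -/
def hwt {n : ℕ} (v : Fin n → ZMod 2) : ℕ :=
  (Finset.univ.filter fun i => v i ≠ 0).card

open Module

open scoped Classical

lemma card_hwt_eq (n j : ℕ) :
    (Finset.univ.filter fun v : Fin n → ZMod 2 => hwt v = j).card = n.choose j := by
  have main : (Finset.univ.filter fun v : Fin n → ZMod 2 => hwt v = j).card
      = (Finset.powersetCard j (Finset.univ : Finset (Fin n))).card := by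
    apply Finset.card_bij (fun v _ => Finset.univ.filter fun i => v i ≠ 0)
    · intro v hv
      simp only [Finset.mem_filter, Finset.mem_univ, true_and] at hv
      simpa [Finset.mem_powersetCard, hwt] using hv
    · intro v hv w hw h
      funext i
      have hvw : (v i ≠ 0) ↔ (w i ≠ 0) := by
        have := Finset.ext_iff.mp h i
        simp only [Finset.mem_filter, Finset.mem_univ, true_and] at this
        exact this
      have h2 : ∀ x : ZMod 2, x = 0 ∨ x = 1 := by decide
      rcases h2 (v i) with h3 | h3 <;> rcases h2 (w i) with h4 | h4 <;> simp_all
    · intro S hS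
      refine ⟨fun i => if i ∈ S then 1 else 0, ?_, ?_⟩
      · rw [Finset.mem_filter]
        refine ⟨Finset.mem_univ _, ?_⟩
        simp only [hwt]
        rw [Finset.mem_powersetCard] at hS
        rw [← hS.2]
        congr 1
        ext i
        by_cases h : i ∈ S <;> simp [h]
      · ext i
        by_cases h : i ∈ S <;> simp [h]
  rw [main, Finset.card_powersetCard]
  simp

lemma card_hwt_le (n k : ℕ) :
    (Finset.univ.filter fun v : Fin n → ZMod 2 => hwt v ≤ k).card
      = ∑ j ∈ Finset.range (k + 1), n.choose j := by
  rw [Finset.card_eq_sum_card_fiberwise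
    (f := fun v : Fin n → ZMod 2 => hwt v) (t := Finset.range (k + 1))
    (fun v hv => by simp only [Finset.mem_coe, Finset.mem_filter] at hv; simp [Nat.lt_succ_iff, hv.2])]
  apply Finset.sum_congr rfl
  intro j hj
  rw [Finset.mem_range, Nat.lt_succ_iff] at hj
  rw [← card_hwt_eq n j]
  congr 1
  ext v
  simp only [Finset.mem_filter, Finset.mem_univ, true_and]
  constructor
  · rintro ⟨-, h⟩; exact h
  · intro h; exact ⟨h ▸ hj, h⟩

-- entropy-vs-binomial key pointwise bound
lemma key_pointwise {n j : ℕ} {ρ : ℝ} (hρ0 : 0 < ρ) (hρ1 : ρ < 1/2)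
    (hj : (j : ℝ) ≤ ρ * n) (hjn : j ≤ n) :
    (2 : ℝ) ^ (-((-ρ * Real.logb 2 ρ - (1 - ρ) * Real.logb 2 (1 - ρ)) * n))
      ≤ ρ ^ j * (1 - ρ) ^ (n - j) := by
  have hy0 : (0:ℝ) < 1 - ρ := by linarith
  have hxy : ρ ≤ 1 - ρ := by linarith
  have hL : (0:ℝ) < (2 : ℝ) ^ (-((-ρ * Real.logb 2 ρ - (1 - ρ) * Real.logb 2 (1 - ρ)) * n)) :=
    Real.rpow_pos_of_pos (by norm_num) _
  have hR : (0:ℝ) < ρ ^ j * (1 - ρ) ^ (n - j) :=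
    mul_pos (pow_pos hρ0 j) (pow_pos hy0 _)
  rw [← Real.log_le_log_iff hL hR]
  rw [Real.log_rpow (by norm_num : (0:ℝ) < 2)]
  rw [Real.log_mul (ne_of_gt (pow_pos hρ0 j)) (ne_of_gt (pow_pos hy0 _))]
  rw [Real.log_pow, Real.log_pow]
  have hcast : ((n - j : ℕ) : ℝ) = (n : ℝ) - j := by
    rw [Nat.cast_sub hjn]
  rw [hcast]
  have hlog2 : (0:ℝ) < Real.log 2 := Real.log_pos (by norm_num)
  have hlogb1 : Real.logb 2 ρ = Real.log ρ / Real.log 2 := rfl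
  have hlogb2 : Real.logb 2 (1-ρ) = Real.log (1-ρ) / Real.log 2 := rfl
  have hmono : Real.log ρ ≤ Real.log (1 - ρ) := Real.log_le_log hρ0 hxy
  have hfact : (0:ℝ) ≤ (ρ * n - j) * (Real.log (1 - ρ) - Real.log ρ) :=
    mul_nonneg (by linarith) (by linarith)
  have hlhs : -((-ρ * Real.logb 2 ρ - (1 - ρ) * Real.logb 2 (1 - ρ)) * n) * Real.log 2
      = (n : ℝ) * (ρ * Real.log ρ + (1 - ρ) * Real.log (1 - ρ)) := by
    rw [hlogb1, hlogb2]
    field_simp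
    ring
  rw [hlhs]
  nlinarith [hfact]

lemma count_lt {n a : ℕ} {ρ : ℝ} (hρ0 : 0 < ρ) (hρ1 : ρ < 1/2) (hn : 0 < n)
    (ha : binEntropy ρ * n < a) :
    (Finset.univ.filter fun v : Fin n → ZMod 2 => (hwt v : ℝ) < ρ * n).card < 2 ^ a := by
  classical
  set k := ⌊ρ * (n:ℝ)⌋₊ with hk
  have hkn : k ≤ n := by
    apply Nat.floor_le_of_le
    nlinarith [show (0:ℝ) ≤ (n:ℝ) from Nat.cast_nonneg n]
  -- the filter is contained in the hwt ≤ k filter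
  have hsub : (Finset.univ.filter fun v : Fin n → ZMod 2 => (hwt v : ℝ) < ρ * n)
      ⊆ (Finset.univ.filter fun v : Fin n → ZMod 2 => hwt v ≤ k) := by
    intro v hv
    rw [Finset.mem_filter] at hv ⊢
    exact ⟨hv.1, Nat.le_floor (le_of_lt hv.2)⟩
  have hcardle := Finset.card_le_card hsub
  rw [card_hwt_le] at hcardle
  -- now bound the binomial sum
  have hy0 : (0:ℝ) < 1 - ρ := by linarith
  have hbinom : (∑ j ∈ Finset.range (n + 1),
      ρ ^ j * (1 - ρ) ^ (n - j) * (n.choose j : ℝ)) = 1 := by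
    rw [← add_pow]
    norm_num
  have hpartial : (∑ j ∈ Finset.range (k + 1),
      ρ ^ j * (1 - ρ) ^ (n - j) * (n.choose j : ℝ)) ≤ 1 := by
    calc (∑ j ∈ Finset.range (k + 1), ρ ^ j * (1 - ρ) ^ (n - j) * (n.choose j : ℝ))
        ≤ (∑ j ∈ Finset.range (n + 1), ρ ^ j * (1 - ρ) ^ (n - j) * (n.choose j : ℝ)) := by
          apply Finset.sum_le_sum_of_subset_of_nonneg
          · exact Finset.range_subset_range.mpr (by omega)
          · intro j _ _
            positivity
      _ = 1 := hbinom
  have hkey : ∀ j ∈ Finset.range (k + 1),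
      (2 : ℝ) ^ (-(binEntropy ρ * n)) * (n.choose j : ℝ)
        ≤ ρ ^ j * (1 - ρ) ^ (n - j) * (n.choose j : ℝ) := by
    intro j hj
    rw [Finset.mem_range, Nat.lt_succ_iff] at hj
    have hjρ : (j : ℝ) ≤ ρ * n := le_trans (Nat.cast_le.mpr hj) (Nat.floor_le (by positivity))
    apply mul_le_mul_of_nonneg_right _ (Nat.cast_nonneg _)
    exact key_pointwise hρ0 hρ1 hjρ (le_trans hj hkn)
  have hsum2 : (2 : ℝ) ^ (-(binEntropy ρ * n)) * (∑ j ∈ Finset.range (k + 1), (n.choose j : ℝ))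
      ≤ 1 := by
    rw [Finset.mul_sum]
    exact le_trans (Finset.sum_le_sum hkey) hpartial
  have h2pos : (0:ℝ) < (2:ℝ) ^ (binEntropy ρ * n) := Real.rpow_pos_of_pos (by norm_num) _
  have hS : (∑ j ∈ Finset.range (k + 1), (n.choose j : ℝ)) ≤ (2:ℝ) ^ (binEntropy ρ * n) := by
    rw [Real.rpow_neg (by norm_num : (0:ℝ) ≤ 2)] at hsum2
    calc (∑ j ∈ Finset.range (k + 1), (n.choose j : ℝ))
        = (2:ℝ) ^ (binEntropy ρ * n) * (((2:ℝ) ^ (binEntropy ρ * n))⁻¹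
            * ∑ j ∈ Finset.range (k + 1), (n.choose j : ℝ)) := by
          rw [← mul_assoc, mul_inv_cancel₀ (ne_of_gt h2pos), one_mul]
      _ ≤ (2:ℝ) ^ (binEntropy ρ * n) * 1 := by
          apply mul_le_mul_of_nonneg_left hsum2 (le_of_lt h2pos)
      _ = (2:ℝ) ^ (binEntropy ρ * n) := mul_one _
  have hfin : ((2:ℝ) ^ (binEntropy ρ * n)) < ((2:ℕ)^a : ℕ) := by
    push_cast
    rw [← Real.rpow_natCast 2 a]
    exact Real.rpow_lt_rpow_left_iff (by norm_num) |>.mpr ha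
  have : ((Finset.univ.filter fun v : Fin n → ZMod 2 => (hwt v : ℝ) < ρ * n).card : ℝ)
      < ((2^a : ℕ) : ℝ) := by
    calc ((Finset.univ.filter fun v : Fin n → ZMod 2 => (hwt v : ℝ) < ρ * n).card : ℝ)
        ≤ ((∑ j ∈ Finset.range (k + 1), n.choose j : ℕ) : ℝ) := Nat.cast_le.mpr hcardle
      _ = (∑ j ∈ Finset.range (k + 1), (n.choose j : ℝ)) := by push_cast; ring
      _ ≤ (2:ℝ) ^ (binEntropy ρ * n) := hS
      _ < _ := hfin
  exact_mod_cast this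




noncomputable section CSSAux

variable {n : ℕ}

/-- The standard dot-product bilinear form on `Fin n → ZMod 2`. -/
def dotB (n : ℕ) : LinearMap.BilinForm (ZMod 2) (Fin n → ZMod 2) :=
  LinearMap.mk₂ (ZMod 2) (fun v w => ∑ i, v i * w i)
    (fun m₁ m₂ w => by simp [add_mul, Finset.sum_add_distrib])
    (fun c m w => by simp [Finset.mul_sum, mul_assoc])
    (fun m w₁ w₂ => by simp [mul_add, Finset.sum_add_distrib])
    (fun c m w => by simp [Finset.mul_sum, mul_left_comm, smul_eq_mul])

@[simp] lemma dotB_apply (v w : Fin n → ZMod 2) : dotB n v w = ∑ i, v i * w i := rfl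

lemma dotB_symm (v w : Fin n → ZMod 2) : dotB n v w = dotB n w v := by
  simp [mul_comm]

lemma dotB_refl : (dotB n).IsRefl := fun v w h => by rw [dotB_symm]; exact h

lemma dotB_nondeg : (dotB n).Nondegenerate := by
  constructor <;>
  · intro v hv
    funext j
    have := hv (Pi.single j 1)
    simpa [Pi.single_apply, Finset.sum_ite_eq] using this

/-- The kernel of `H.mulVecLin` is the orthogonal complement of the row span. -/
lemma ker_mulVecLin_eq_orth {r : ℕ} (H : Matrix (Fin r) (Fin n) (ZMod 2)) :
    LinearMap.ker H.mulVecLin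
      = (dotB n).orthogonal (Submodule.span (ZMod 2) (Set.range fun i => H i)) := by
  ext w
  rw [LinearMap.mem_ker, LinearMap.BilinForm.mem_orthogonal_iff]
  constructor
  · intro hw u hu
    induction hu using Submodule.span_induction with
    | mem x hx =>
      obtain ⟨b, rfl⟩ := hx
      have : H.mulVec w b = 0 := by rw [show H.mulVec w = 0 from hw]; rfl
      simpa [LinearMap.BilinForm.IsOrtho, Matrix.mulVec, dotProduct, mul_comm] using this
    | zero => simp [LinearMap.BilinForm.IsOrtho]
    | add x y _ _ hx hy =>
      simp only [LinearMap.BilinForm.IsOrtho, map_add, LinearMap.add_apply] at *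
      rw [hx, hy, add_zero]
    | smul c x _ hx =>
      simp only [LinearMap.BilinForm.IsOrtho, map_smul, LinearMap.smul_apply] at *
      rw [hx, smul_zero]
  · intro hw
    funext b
    have := hw (H b) (Submodule.subset_span ⟨b, rfl⟩)
    simpa [LinearMap.BilinForm.IsOrtho, Matrix.mulVecLin, Matrix.mulVec, dotProduct,
      mul_comm] using this

/-- For `v` outside the row span, there is a kernel vector not orthogonal to `v`. -/
lemma exists_witness {r : ℕ} (H : Matrix (Fin r) (Fin n) (ZMod 2))
    {v : Fin n → ZMod 2}
    (hv : v ∉ Submodule.span (ZMod 2) (Set.range fun i => H i)) :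
    ∃ w ∈ LinearMap.ker H.mulVecLin, ∑ i, v i * w i ≠ 0 := by
  by_contra hc
  push_neg at hc
  apply hv
  have : v ∈ (dotB n).orthogonal (LinearMap.ker H.mulVecLin) := by
    rw [LinearMap.BilinForm.mem_orthogonal_iff]
    intro u hu
    have := hc u hu
    rw [dotB_symm]
    simpa using this
  rw [ker_mulVecLin_eq_orth H] at this
  rwa [LinearMap.BilinForm.orthogonal_orthogonal dotB_nondeg dotB_refl] at this

end CSSAux





variable {n : ℕ}

/-- For `v` having a non-orthogonal witness in `K`, exactly half of `K` is orthogonal to `v`. -/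
lemma half_orthogonal (K : Submodule (ZMod 2) (Fin n → ZMod 2)) {v w1 : Fin n → ZMod 2}
    (hw1 : w1 ∈ K) (hd : ∑ i, v i * w1 i ≠ 0) :
    2 * ((Finset.univ.filter (· ∈ K)).filter fun w => ∑ i, v i * w i = 0).card
      = (Finset.univ.filter (· ∈ K)).card := by
  set Kf := Finset.univ.filter (· ∈ K) with hKf
  have hsplit := Finset.card_filter_add_card_filter_not
    (s := Kf) (p := fun w => ∑ i, v i * w i = 0)
  have hbij : (Kf.filter fun w => ∑ i, v i * w i = 0).card
      = (Kf.filter fun w => ¬ (∑ i, v i * w i = 0)).card := by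
    apply Finset.card_bij (fun w _ => w + w1)
    · intro w hw
      rw [Finset.mem_filter] at hw ⊢
      rw [hKf, Finset.mem_filter] at hw ⊢
      refine ⟨⟨Finset.mem_univ _, K.add_mem hw.1.2 hw1⟩, ?_⟩
      have : (∑ i, v i * (w i + w1 i)) = (∑ i, v i * w i) + ∑ i, v i * w1 i := by
        rw [← Finset.sum_add_distrib]
        apply Finset.sum_congr rfl
        intro i _
        ring
      simp only [Pi.add_apply, this, hw.2, zero_add]
      exact hd
    · intro w hw w' hw' h
      have := congrArg (· + w1) h
      simpa [add_assoc, CharTwo.add_self_eq_zero] using this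
    · intro u hu
      rw [Finset.mem_filter, hKf, Finset.mem_filter] at hu
      refine ⟨u + w1, ?_, ?_⟩
      · rw [Finset.mem_filter, hKf, Finset.mem_filter]
        refine ⟨⟨Finset.mem_univ _, K.add_mem hu.1.2 hw1⟩, ?_⟩
        have : (∑ i, v i * (u i + w1 i)) = (∑ i, v i * u i) + ∑ i, v i * w1 i := by
          rw [← Finset.sum_add_distrib]
          exact Finset.sum_congr rfl fun i _ => by ring
        simp only [Pi.add_apply, this]
        have h1 : (∑ i, v i * u i) = 1 := by
          have h2 : ∀ x : ZMod 2, x ≠ 0 → x = 1 := by decide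
          exact h2 _ hu.2
        have h1' : (∑ i, v i * w1 i) = 1 := by
          have h2 : ∀ x : ZMod 2, x ≠ 0 → x = 1 := by decide
          exact h2 _ hd
        rw [h1, h1']
        decide
      · funext i
        simp [add_assoc, CharTwo.add_self_eq_zero]
  rw [← hsplit, ← hbij, two_mul]

/-- Greedy growth lemma: we can grow `W` inside `K` by `a` dimensions killing all bad vectors. -/
lemma grow {n : ℕ} (K : Submodule (ZMod 2) (Fin n → ZMod 2)) (B0 : Finset (Fin n → ZMod 2))
    (hwit : ∀ v ∈ B0, ∃ w ∈ K, ∑ i, v i * w i ≠ 0) :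
    ∀ (a : ℕ) (W : Submodule (ZMod 2) (Fin n → ZMod 2)), W ≤ K →
      finrank (ZMod 2) W + a ≤ finrank (ZMod 2) K →
      (B0.filter fun v => ∀ w ∈ W, ∑ i, v i * w i = 0).card < 2 ^ a →
      ∃ W', W ≤ W' ∧ W' ≤ K ∧ finrank (ZMod 2) W' = finrank (ZMod 2) W + a ∧
        ∀ v ∈ B0, ∃ w ∈ W', ∑ i, v i * w i ≠ 0 := by
  intro a
  induction a with
  | zero =>
    intro W hWK hdim hcard
    refine ⟨W, le_rfl, hWK, (add_zero _).symm, ?_⟩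
    intro v hv
    rw [Nat.pow_zero, Nat.lt_one_iff, Finset.card_eq_zero] at hcard
    by_contra hc
    push_neg at hc
    have : v ∈ B0.filter fun v => ∀ w ∈ W, ∑ i, v i * w i = 0 :=
      Finset.mem_filter.mpr ⟨hv, hc⟩
    rw [hcard] at this
    exact absurd this (Finset.notMem_empty v)
  | succ a ih =>
    intro W hWK hdim hcard
    obtain ⟨Bc, hBc⟩ : ∃ B, (B0.filter fun v => ∀ w ∈ W, ∑ i, v i * w i = 0) = B := ⟨_, rfl⟩
    rw [hBc] at hcard
    -- find w ∈ K, w ∉ W, killing at least half of Bc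
    have hstep : ∃ w, w ∈ K ∧ w ∉ W ∧
        2 * (Bc.filter fun v => ∑ i, v i * w i = 0).card ≤ Bc.card := by
      by_cases hBce : Bc = ∅
      · have hlt : W < K := by
          refine lt_of_le_of_ne hWK ?_
          intro h
          rw [h] at hdim
          omega
        obtain ⟨w, hwK, hwW⟩ := SetLike.exists_of_lt hlt
        exact ⟨w, hwK, hwW, by simp [hBce]⟩
      · -- averaging over Kf
        obtain ⟨Kf, hKf⟩ : ∃ F, Finset.univ.filter (· ∈ K) = F := ⟨_, rfl⟩
        have hKf0 : 0 < Kf.card := by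
          apply Finset.card_pos.mpr
          exact ⟨0, hKf ▸ Finset.mem_filter.mpr ⟨Finset.mem_univ _, K.zero_mem⟩⟩
        have hBc0 : 0 < Bc.card :=
          Finset.card_pos.mpr (Finset.nonempty_of_ne_empty hBce)
        have hhalf : ∀ v ∈ Bc,
            2 * (Kf.filter fun w => ∑ i, v i * w i = 0).card = Kf.card := by
          intro v hv
          have hvB0 : v ∈ B0 := by
            rw [← hBc] at hv
            exact Finset.mem_of_mem_filter v hv
          obtain ⟨w1, hw1K, hw1d⟩ := hwit v hvB0
          rw [← hKf]
          exact half_orthogonal K hw1K hw1d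
        have hswap : ∑ w ∈ Kf, (Bc.filter fun v => ∑ i, v i * w i = 0).card
            = ∑ v ∈ Bc, (Kf.filter fun w => ∑ i, v i * w i = 0).card := by
          simp only [Finset.card_filter]
          exact Finset.sum_comm
        have htot : 2 * ∑ w ∈ Kf, (Bc.filter fun v => ∑ i, v i * w i = 0).card
            = Bc.card * Kf.card := by
          rw [hswap, Finset.mul_sum, Finset.sum_congr rfl hhalf, Finset.sum_const, smul_eq_mul]
        by_contra hc
        push_neg at hc
        have hlb : ∀ w ∈ Kf, Bc.card + 1 ≤ 2 * (Bc.filter fun v => ∑ i, v i * w i = 0).card := by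
          intro w hw
          have hwKmem : w ∈ K := by
            rw [← hKf, Finset.mem_filter] at hw
            exact hw.2
          by_cases hwW : w ∈ W
          · have hfull : (Bc.filter fun v => ∑ i, v i * w i = 0) = Bc := by
              apply Finset.filter_true_of_mem
              intro v hv
              rw [← hBc, Finset.mem_filter] at hv
              exact hv.2 w hwW
            rw [hfull]
            linarith
          · have := hc w hwKmem hwW
            linarith
        have hsumlb : Kf.card * (Bc.card + 1)
            ≤ 2 * ∑ w ∈ Kf, (Bc.filter fun v => ∑ i, v i * w i = 0).card := by
          rw [Finset.mul_sum]
          calc Kf.card * (Bc.card + 1) = ∑ _w ∈ Kf, (Bc.card + 1) := by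
                rw [Finset.sum_const, smul_eq_mul]
            _ ≤ _ := Finset.sum_le_sum hlb
        rw [htot] at hsumlb
        nlinarith
    obtain ⟨w, hwK, hwW, hwhalf⟩ := hstep
    -- grow W by w
    set W' := W ⊔ Submodule.span (ZMod 2) {w} with hW'
    have hWW' : W ≤ W' := le_sup_left
    have hwW' : w ∈ W' := Submodule.mem_sup_right (Submodule.mem_span_singleton_self w)
    have hW'K : W' ≤ K := sup_le hWK ((Submodule.span_singleton_le_iff_mem w K).mpr hwK)
    have hwne : w ≠ 0 := fun h => hwW (h ▸ W.zero_mem)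
    have hinf : W ⊓ Submodule.span (ZMod 2) {w} = ⊥ := by
      rw [eq_bot_iff]
      rintro x ⟨hxW, hxs⟩
      obtain ⟨c, rfl⟩ := Submodule.mem_span_singleton.mp hxs
      rcases (show ∀ c : ZMod 2, c = 0 ∨ c = 1 by decide) c with rfl | rfl
      · simp
      · rw [one_smul] at hxW
        exact absurd hxW hwW
    have hrank' : finrank (ZMod 2) W' = finrank (ZMod 2) W + 1 := by
      have := Submodule.finrank_sup_add_finrank_inf_eq W (Submodule.span (ZMod 2) {w})
      rw [hinf, finrank_bot, finrank_span_singleton hwne] at this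
      linarith
    obtain ⟨Bc', hBc'⟩ : ∃ B, (B0.filter fun v => ∀ u ∈ W', ∑ i, v i * u i = 0) = B := ⟨_, rfl⟩
    have hcard' : Bc'.card < 2 ^ a := by
      have hsub : Bc' ⊆ Bc.filter fun v => ∑ i, v i * w i = 0 := by
        intro v hv
        rw [← hBc', Finset.mem_filter] at hv
        rw [Finset.mem_filter, ← hBc, Finset.mem_filter]
        exact ⟨⟨hv.1, fun u hu => hv.2 u (hWW' hu)⟩, hv.2 w hwW'⟩
      have hle := Finset.card_le_card hsub
      have h3 : 2 ^ (a + 1) = 2 ^ a * 2 := pow_succ 2 a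
      linarith
    have hdim' : finrank (ZMod 2) W' + a ≤ finrank (ZMod 2) K := by linarith
    obtain ⟨W'', h1, h2, h3, h4⟩ := ih W' hW'K hdim' (hBc' ▸ hcard')
    have hfr : finrank (ZMod 2) W'' = finrank (ZMod 2) W + (a + 1) := by linarith
    exact ⟨W'', le_trans hWW' h1, h2, hfr, h4⟩


theorem css_code_improvement
    {rX rZ n m : ℕ} (hm : 5 ≤ m) (hdvd : m ∣ 2 * n)
    (HX : Matrix (Fin rX) (Fin n) (ZMod 2)) (HZ : Matrix (Fin rZ) (Fin n) (ZMod 2))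
    (horth : ∀ (a : Fin rX) (b : Fin rZ), ∑ i : Fin n, HX a i * HZ b i = 0)
    (hrX : HX.rank = 2 * n / m - 1) (hrZ : HZ.rank = 2 * n / m - 1)
    (R : ℝ) (hRdef : R = 1 - 4 / (m : ℝ) + 2 / (n : ℝ))
    (ρ : ℝ) (hρ : ρ ∈ Set.Ioo (0 : ℝ) (1 / 2)) (a : ℕ)
    (ha1 : binEntropy ρ < (a : ℝ) / n) (ha2 : (a : ℝ) / n < R / 2) :
    ∃ VX VZ : Submodule (ZMod 2) (Fin n → ZMod 2),
      Submodule.span (ZMod 2) (Set.range fun i => HX i) ≤ VX ∧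
      VX ≤ LinearMap.ker HZ.mulVecLin ∧
      Submodule.span (ZMod 2) (Set.range fun i => HZ i) ≤ VZ ∧
      VZ ≤ LinearMap.ker HX.mulVecLin ∧
      Module.finrank (ZMod 2) VX = HX.rank + a ∧
      Module.finrank (ZMod 2) VZ = HZ.rank + a ∧
      ∀ v : Fin n → ZMod 2,
        (((∀ y ∈ VX, ∑ i : Fin n, v i * y i = 0) ∧ v ∉ VZ) ∨
          ((∀ y ∈ VZ, ∑ i : Fin n, v i * y i = 0) ∧ v ∉ VX)) →
        ρ * n ≤ (hwt v : ℝ) := by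
  obtain ⟨hρ0, hρ1'⟩ := hρ
  have hρ1 : ρ < 1/2 := hρ1'
  -- binary entropy is nonnegative on (0, 1/2)
  have hlogρ : Real.logb 2 ρ ≤ 0 := Real.logb_nonpos (by norm_num) (le_of_lt hρ0) (by linarith)
  have hlogρ' : Real.logb 2 (1 - ρ) ≤ 0 :=
    Real.logb_nonpos (by norm_num) (by linarith) (by linarith)
  have hent0 : 0 ≤ binEntropy ρ := by
    unfold binEntropy
    nlinarith
  -- n and a are positive
  have hn : 0 < n := by
    by_contra h
    push_neg at h
    interval_cases n
    norm_num at ha1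
    linarith
  have hnR : (0:ℝ) < n := by exact_mod_cast hn
  have ha0 : 0 < a := by
    by_contra h
    push_neg at h
    interval_cases a
    norm_num at ha1
    linarith
  -- arithmetic on q = 2n/m
  have hm0 : 0 < m := by omega
  have hmR : (0:ℝ) < m := by exact_mod_cast hm0
  have hqm : (2 * n / m) * m = 2 * n := Nat.div_mul_cancel hdvd
  obtain ⟨q, hq⟩ : ∃ q, 2 * n / m = q := ⟨_, rfl⟩
  rw [hq] at hqm hrX hrZ
  have hq1 : 1 ≤ q := by
    rcases Nat.eq_zero_or_pos q with h | h
    · rw [h, zero_mul] at hqm; omega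
    · exact h
  have hqn : q ≤ n := by
    have h5 : q * 5 ≤ q * m := Nat.mul_le_mul_left q hm
    rw [hqm] at h5
    omega
  have hqR : (q:ℝ) * m = 2 * n := by exact_mod_cast hqm
  -- key inequality : 2a + 2q ≤ n + 1
  have haR : (a:ℝ) < R / 2 * n := (div_lt_iff₀ hnR).mp ha2
  have hkeyR : (2 * a + 2 * q : ℝ) < (n:ℝ) + 2 := by
    rw [hRdef] at haR
    have h1 : (4:ℝ) / m * n = 2 * q := by
      field_simp
      linarith [hqR]
    have h2 : R / 2 * n = (1 - 4/(m:ℝ) + 2/(n:ℝ)) / 2 * n := by rw [hRdef]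
    have h3 : (1 - 4/(m:ℝ) + 2/(n:ℝ)) / 2 * n = n / 2 - (4/(m:ℝ) * n) / 2 + 1 := by
      field_simp
    rw [h3, h1] at haR
    linarith
  have hkey : 2 * a + 2 * q ≤ n + 1 := by
    have : (2 * a + 2 * q : ℕ) < n + 2 := by exact_mod_cast hkeyR
    omega
  -- ranks are at most n
  have hrankXn : HX.rank ≤ n := by rw [hrX]; omega
  have hrankZn : HZ.rank ≤ n := by rw [hrZ]; omega
  -- kernels and spans
  have hXZ : Submodule.span (ZMod 2) (Set.range fun i => HX i) ≤ LinearMap.ker HZ.mulVecLin := by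
    rw [Submodule.span_le]
    rintro x ⟨b, rfl⟩
    rw [SetLike.mem_coe, LinearMap.mem_ker]
    funext c
    have := horth b c
    simpa [Matrix.mulVecLin, Matrix.mulVec, dotProduct, mul_comm] using this
  have hZX : Submodule.span (ZMod 2) (Set.range fun i => HZ i) ≤ LinearMap.ker HX.mulVecLin := by
    rw [Submodule.span_le]
    rintro x ⟨b, rfl⟩
    rw [SetLike.mem_coe, LinearMap.mem_ker]
    funext c
    have := horth c b
    simpa [Matrix.mulVecLin, Matrix.mulVec, dotProduct, mul_comm] using this
  -- dimension computations
  have hrankX : Module.finrank (ZMod 2) (Submodule.span (ZMod 2) (Set.range fun i => HX i))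
      = HX.rank := (Matrix.rank_eq_finrank_span_row HX).symm
  have hrankZ : Module.finrank (ZMod 2) (Submodule.span (ZMod 2) (Set.range fun i => HZ i))
      = HZ.rank := (Matrix.rank_eq_finrank_span_row HZ).symm
  have hfinn : Module.finrank (ZMod 2) (Fin n → ZMod 2) = n := Module.finrank_fin_fun (ZMod 2)
  have hkerZ : Module.finrank (ZMod 2) (LinearMap.ker HZ.mulVecLin) = n - HZ.rank := by
    have h1 := LinearMap.finrank_range_add_finrank_ker HZ.mulVecLin
    have h2 : HZ.rank = Module.finrank (ZMod 2) (LinearMap.range HZ.mulVecLin) := rfl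
    rw [hfinn] at h1
    omega
  have hkerX : Module.finrank (ZMod 2) (LinearMap.ker HX.mulVecLin) = n - HX.rank := by
    have h1 := LinearMap.finrank_range_add_finrank_ker HX.mulVecLin
    have h2 : HX.rank = Module.finrank (ZMod 2) (LinearMap.range HX.mulVecLin) := rfl
    rw [hfinn] at h1
    omega
  have hdimX : Module.finrank (ZMod 2) (Submodule.span (ZMod 2) (Set.range fun i => HX i)) + a
      ≤ Module.finrank (ZMod 2) (LinearMap.ker HZ.mulVecLin) := by
    rw [hrankX, hkerZ, hrX, hrZ]
    omega
  have hdimZ : Module.finrank (ZMod 2) (Submodule.span (ZMod 2) (Set.range fun i => HZ i)) + a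
      ≤ Module.finrank (ZMod 2) (LinearMap.ker HX.mulVecLin) := by
    rw [hrankZ, hkerX, hrX, hrZ]
    omega
  -- the bad sets
  classical
  have hentan : binEntropy ρ * n < a := (lt_div_iff₀ hnR).mp ha1
  have hcount := count_lt hρ0 hρ1 hn hentan
  obtain ⟨BX, hBX⟩ : ∃ B, (Finset.univ.filter fun v : Fin n → ZMod 2 =>
      ((hwt v : ℝ) < ρ * n ∧ v ∉ Submodule.span (ZMod 2) (Set.range fun i => HZ i))) = B :=
    ⟨_, rfl⟩
  obtain ⟨BZ, hBZ⟩ : ∃ B, (Finset.univ.filter fun v : Fin n → ZMod 2 =>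
      ((hwt v : ℝ) < ρ * n ∧ v ∉ Submodule.span (ZMod 2) (Set.range fun i => HX i))) = B :=
    ⟨_, rfl⟩
  have hsubX : BX ⊆ Finset.univ.filter fun v : Fin n → ZMod 2 => (hwt v : ℝ) < ρ * n := by
    rw [← hBX]
    intro v hv
    rw [Finset.mem_filter] at hv ⊢
    exact ⟨hv.1, hv.2.1⟩
  have hsubZ : BZ ⊆ Finset.univ.filter fun v : Fin n → ZMod 2 => (hwt v : ℝ) < ρ * n := by
    rw [← hBZ]
    intro v hv
    rw [Finset.mem_filter] at hv ⊢
    exact ⟨hv.1, hv.2.1⟩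
  have hcardX : BX.card < 2 ^ a := lt_of_le_of_lt (Finset.card_le_card hsubX) hcount
  have hcardZ : BZ.card < 2 ^ a := lt_of_le_of_lt (Finset.card_le_card hsubZ) hcount
  have hwitX : ∀ v ∈ BX, ∃ w ∈ LinearMap.ker HZ.mulVecLin, ∑ i, v i * w i ≠ 0 := by
    intro v hv
    rw [← hBX, Finset.mem_filter] at hv
    exact exists_witness HZ hv.2.2
  have hwitZ : ∀ v ∈ BZ, ∃ w ∈ LinearMap.ker HX.mulVecLin, ∑ i, v i * w i ≠ 0 := by
    intro v hv
    rw [← hBZ, Finset.mem_filter] at hv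
    exact exists_witness HX hv.2.2
  obtain ⟨VX, hVX1, hVX2, hVX3, hVX4⟩ := grow (LinearMap.ker HZ.mulVecLin) BX hwitX a
    (Submodule.span (ZMod 2) (Set.range fun i => HX i)) hXZ hdimX
    (lt_of_le_of_lt (Finset.card_le_card (Finset.filter_subset _ _)) hcardX)
  obtain ⟨VZ, hVZ1, hVZ2, hVZ3, hVZ4⟩ := grow (LinearMap.ker HX.mulVecLin) BZ hwitZ a
    (Submodule.span (ZMod 2) (Set.range fun i => HZ i)) hZX hdimZ
    (lt_of_le_of_lt (Finset.card_le_card (Finset.filter_subset _ _)) hcardZ)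
  refine ⟨VX, VZ, hVX1, hVX2, hVZ1, hVZ2, by rw [hVX3, hrankX], by rw [hVZ3, hrankZ], ?_⟩
  intro v hv
  by_contra hlt
  push_neg at hlt
  rcases hv with ⟨hvorth, hvnot⟩ | ⟨hvorth, hvnot⟩
  · have hvBX : v ∈ BX := by
      rw [← hBX, Finset.mem_filter]
      exact ⟨Finset.mem_univ _, hlt, fun h => hvnot (hVZ1 h)⟩
    obtain ⟨w, hw, hwne⟩ := hVX4 v hvBX
    exact hwne (hvorth w hw)
  · have hvBZ : v ∈ BZ := by
      rw [← hBZ, Finset.mem_filter]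
      exact ⟨Finset.mem_univ _, hlt, fun h => hvnot (hVX1 h)⟩
    obtain ⟨w, hw, hwne⟩ := hVZ4 v hvBZ
    exact hwne (hvorth w hw)
end
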